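/- Throughout the execution of Algorithm B, the following invariant holds at every step: for each ⅋-node L present in the current deNM-tree T, either L is included in the queue Q_up of some labeled node of T, or the right premise label r_L is included in the queue Q_right of some labeled node of T. -/

import Mathlib

/-! ## MLL formulas, links, proof structures, proof nets, DR-switchings -/

abbrev Occ := ℕ

/-- MLL formulas over the single atom `p`. -/
inductive MLLFormula : Type
  | pos : MLLFormula
  | neg : MLLFormula
  | tensor : MLLFormula → MLLFormula → MLLFormula
  | par : MLLFormula → MLLFormula → MLLFormula
deriving DecidableEq

/-- MLL links, given by their occurrences. -/
inductive MLLLink : Type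
  | id (c1 c2 : Occ) : MLLLink
  | tensor (l r c : Occ) : MLLLink
  | par (l r c : Occ) : MLLLink
deriving DecidableEq

def MLLLink.prems : MLLLink → List Occ
  | .id _ _ => []
  | .tensor l r _ => [l, r]
  | .par l r _ => [l, r]

def MLLLink.concs : MLLLink → List Occ
  | .id c1 c2 => [c1, c2]
  | .tensor _ _ c => [c]
  | .par _ _ c => [c]

def MLLLink.IsPar : MLLLink → Prop
  | .par _ _ _ => True
  | _ => False

/-- An MLL proof structure: a finite set of links over formula occurrences. -/
structure ProofStructure where
  links : Finset MLLLink
  form : Occ → MLLFormula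
  nodupLink : ∀ L ∈ links, (MLLLink.concs L ++ MLLLink.prems L).Nodup
  formOk : ∀ L ∈ links,
    (∀ c1 c2, L = MLLLink.id c1 c2 → form c1 = MLLFormula.pos ∧ form c2 = MLLFormula.neg) ∧
    (∀ l r c, L = MLLLink.tensor l r c → form c = MLLFormula.tensor (form l) (form r)) ∧
    (∀ l r c, L = MLLLink.par l r c → form c = MLLFormula.par (form l) (form r))
  concUnique : ∀ L1 ∈ links, ∀ L2 ∈ links, ∀ x,
    x ∈ MLLLink.concs L1 → x ∈ MLLLink.concs L2 → L1 = L2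
  premUnique : ∀ L1 ∈ links, ∀ L2 ∈ links, ∀ x,
    x ∈ MLLLink.prems L1 → x ∈ MLLLink.prems L2 → L1 = L2
  premIsConc : ∀ L ∈ links, ∀ x ∈ MLLLink.prems L, ∃ K ∈ links, K ≠ L ∧ x ∈ MLLLink.concs K

/-- The set of occurrences of a set of links. -/
def occsOf (S : Finset MLLLink) : Set Occ :=
  {x | ∃ L ∈ S, x ∈ MLLLink.concs L ∨ x ∈ MLLLink.prems L}

/-- `x` is a conclusion of the set of links `S`, i.e. a conclusion of some link of `S`
that is not a premise of any link of `S`. -/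
def IsConcOfSet (S : Finset MLLLink) (x : Occ) : Prop :=
  (∃ L ∈ S, x ∈ MLLLink.concs L) ∧ ∀ L ∈ S, x ∉ MLLLink.prems L

/-- Sequentializability: the inductive construction of MLL proof nets, mirroring
the ID, ⊗ and ⅋ rules of the MLL sequent calculus. -/
inductive Sequentializable (form : Occ → MLLFormula) : Finset MLLLink → Prop
  | id (c1 c2 : Occ) : c1 ≠ c2 → form c1 = MLLFormula.pos → form c2 = MLLFormula.neg →
      Sequentializable form {MLLLink.id c1 c2}
  | tensor (S1 S2 : Finset MLLLink) (l r c : Occ) :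
      Sequentializable form S1 → Sequentializable form S2 →
      (∀ x, x ∈ occsOf S1 → x ∉ occsOf S2) →
      IsConcOfSet S1 l → IsConcOfSet S2 r →
      c ∉ occsOf S1 → c ∉ occsOf S2 →
      form c = MLLFormula.tensor (form l) (form r) →
      Sequentializable form (insert (MLLLink.tensor l r c) (S1 ∪ S2))
  | par (S : Finset MLLLink) (l r c : Occ) :
      Sequentializable form S →
      l ≠ r → IsConcOfSet S l → IsConcOfSet S r →
      c ∉ occsOf S →
      form c = MLLFormula.par (form l) (form r) →
      Sequentializable form (insert (MLLLink.par l r c) S)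

/-- An MLL proof net is a sequentializable MLL proof structure. -/
def ProofStructure.IsProofNet (Θ : ProofStructure) : Prop :=
  Sequentializable Θ.form Θ.links

/-- The edges contributed by a link under a DR-switching `sw`
(`sw L = false` selects the left premise of a ⅋-link, `true` the right one). -/
def drStep (sw : MLLLink → Bool) (L : MLLLink) (x y : Occ) : Prop :=
  match L with
  | .id c1 c2 => x = c1 ∧ y = c2
  | .tensor l r c => (x = l ∧ y = c) ∨ (x = r ∧ y = c)
  | .par l r c => if sw (MLLLink.par l r c) = true then x = r ∧ y = c else x = l ∧ y = c

/-- The DR-graph of a proof structure under a DR-switching. -/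
def DRGraph (Θ : ProofStructure) (sw : MLLLink → Bool) : SimpleGraph Occ where
  Adj x y := x ≠ y ∧ ∃ L ∈ Θ.links, drStep sw L x y ∨ drStep sw L y x
  symm := ⟨by
    rintro x y ⟨hxy, L, hL, h⟩
    exact ⟨hxy.symm, L, hL, h.symm⟩⟩
  loopless := ⟨by rintro x ⟨hxx, _⟩; exact hxx rfl⟩

def ProofStructure.occSet (Θ : ProofStructure) : Set Occ := occsOf Θ.links

/-- The extreme left DR-switching `S_∀ℓ`. -/
def extremeLeft : MLLLink → Bool := fun _ => false

/-- The extreme left DR-graph `S_∀ℓ(Θ)`. -/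
def DRGraphL (Θ : ProofStructure) : SimpleGraph Occ := DRGraph Θ extremeLeft

/-- `S_∀ℓ(Θ)` is a tree (on the vertex set of occurrences of `Θ`). -/
def DRTreeL (Θ : ProofStructure) : Prop :=
  ((DRGraphL Θ).induce Θ.occSet).IsTree

/-- Consistency of a ⅋-link with premises `l`, `r` and conclusion `c`:
the unique path in the tree `S_∀ℓ(Θ)` from `l` to `r` does not contain `c`. -/
def ParLinkConsistent (Θ : ProofStructure) (l r c : Occ) : Prop :=
  ∀ p : (DRGraphL Θ).Walk l r, p.IsPath → c ∉ p.support

/-- Every ⅋-link of `Θ` is consistent in `S_∀ℓ(Θ)`. -/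
def AllParConsistent (Θ : ProofStructure) : Prop :=
  ∀ l r c, MLLLink.par l r c ∈ Θ.links → ParLinkConsistent Θ l r c

/-- The edge relation of the directed graph `G(S_∀ℓ(Θ))` on ⅋-links:
`(L1, L2)` is an edge when the unique path in `S_∀ℓ(Θ)` between the premises of `L2`
contains the node of `L1`. -/
def deNMRel (Θ : ProofStructure) (L1 L2 : MLLLink) : Prop :=
  L1 ∈ Θ.links ∧ L2 ∈ Θ.links ∧ L1 ≠ L2 ∧
  ∃ l1 r1 c1, L1 = MLLLink.par l1 r1 c1 ∧
  ∃ l2 r2 c2, L2 = MLLLink.par l2 r2 c2 ∧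
  ∃ p : (DRGraphL Θ).Walk l2 r2, p.IsPath ∧ c1 ∈ p.support

/-- Acyclicity of a directed graph given by a relation. -/
def DirAcyclicRel {α : Type} (R : α → α → Prop) : Prop :=
  ∀ x, ¬ Relation.TransGen R x x

/-- `x` is the left premise of the ⅋-link `P` of `Θ`. -/
def leftPremOfPar (Θ : ProofStructure) (x : Occ) (P : MLLLink) : Prop :=
  P ∈ Θ.links ∧ ∃ r c, P = MLLLink.par x r c

/-- `x` is the right premise of the ⅋-link `P` of `Θ`. -/
def rightPremOfPar (Θ : ProofStructure) (x : Occ) (P : MLLLink) : Prop :=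
  P ∈ Θ.links ∧ ∃ l c, P = MLLLink.par l x c

/-- `x` is a premise of some ⅋-link of `Θ`. -/
def premOfParLink (Θ : ProofStructure) (x : Occ) : Prop :=
  ∃ P, leftPremOfPar Θ x P ∨ rightPremOfPar Θ x P

/-- `x` is a conclusion of the proof structure `Θ`. -/
def IsConcOfTheta (Θ : ProofStructure) (x : Occ) : Prop :=
  IsConcOfSet Θ.links x

/-! ## deNM-trees, the translation T(Θ), the rewriting system, and Algorithm A -/

/-- Labels `ℓ_L` and `r_L` for ⅋-links `L`. -/
inductive DLabel : Type
  | left (L : MLLLink) : DLabel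
  | right (L : MLLLink) : DLabel
deriving DecidableEq

/-- A node of a deNM-tree is either a labeled node carrying a finite label set,
or a ⅋-node labeled by a ⅋-link. -/
inductive DNodeKind : Type
  | labeled (s : Finset DLabel) : DNodeKind
  | par (L : MLLLink) : DNodeKind

/-- The raw data of a deNM-tree: a finite vertex set, a node-kind assignment,
a finite edge set, and for each ⅋-node the neighbour attached at its upper port. -/
structure PreTree where
  V : Finset ℕ
  kind : ℕ → DNodeKind
  edges : Finset (Sym2 ℕ)
  upper : ℕ → Option ℕ

/-- The underlying undirected graph of a deNM-tree. -/
def PreTree.graph (T : PreTree) : SimpleGraph ℕ where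
  Adj x y := x ≠ y ∧ s(x, y) ∈ T.edges
  symm := ⟨by
    rintro x y ⟨hxy, he⟩
    exact ⟨hxy.symm, by rwa [Sym2.eq_swap]⟩⟩
  loopless := ⟨by rintro x ⟨hxx, _⟩; exact hxx rfl⟩

/-- The degree of a vertex. -/
def PreTree.degree (T : PreTree) (v : ℕ) : ℕ :=
  (T.edges.filter (fun e => v ∈ e)).card

/-- `n` is a labeled node of `T`. -/
def PreTree.IsLabeledVertex (T : PreTree) (n : ℕ) : Prop :=
  n ∈ T.V ∧ ∃ s, T.kind n = DNodeKind.labeled s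

/-- `T` is a deNM-tree: a finite tree whose ⅋-nodes have degree 1 or 2 and have
their upper port attached to a neighbour. -/
def PreTree.IsDeNMTree (T : PreTree) : Prop :=
  (∀ e ∈ T.edges, ∀ x ∈ e, x ∈ T.V) ∧
  (∀ e ∈ T.edges, ¬ e.IsDiag) ∧
  (T.graph.induce (↑T.V : Set ℕ)).IsTree ∧
  ∀ v ∈ T.V, ∀ L, T.kind v = DNodeKind.par L →
    (∃ u ∈ T.V, T.upper v = some u ∧ s(v, u) ∈ T.edges) ∧
    1 ≤ T.degree v ∧ T.degree v ≤ 2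

/-- ⅋-consistency of a deNM-tree: for every ⅋-node `v` (for the ⅋-link `L`),
the unique path between its upper-port neighbour (the left premise position)
and any labeled node carrying `r_L` (the right premise position) avoids `v`. -/
def PreTree.ParConsistentD (T : PreTree) : Prop :=
  ∀ v ∈ T.V, ∀ L, T.kind v = DNodeKind.par L →
    ∀ u, T.upper v = some u →
      ∀ w ∈ T.V, ∀ s, T.kind w = DNodeKind.labeled s → DLabel.right L ∈ s →
        ∀ p : T.graph.Walk u w, p.IsPath → v ∉ p.support

/-- The induced directed relation on ⅋-nodes of a deNM-tree:
`(v1, v2)` when the path between the two premise positions of `v2`'s ⅋-link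
passes through `v1`. -/
def PreTree.dirRel (T : PreTree) (v1 v2 : ℕ) : Prop :=
  v1 ∈ T.V ∧ v2 ∈ T.V ∧ v1 ≠ v2 ∧
  (∃ L1, T.kind v1 = DNodeKind.par L1) ∧
  ∃ L2, T.kind v2 = DNodeKind.par L2 ∧
    ∃ u, T.upper v2 = some u ∧
      ∃ w ∈ T.V, ∃ s, T.kind w = DNodeKind.labeled s ∧ DLabel.right L2 ∈ s ∧
        ∃ p : T.graph.Walk u w, p.IsPath ∧ v1 ∈ p.support

/-- Directed acyclicity of a deNM-tree. -/
def PreTree.DirAcyclicD (T : PreTree) : Prop :=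
  ∀ v, ¬ Relation.TransGen T.dirRel v v

/-! ### The translation `T(Θ)` -/

/-- A ⅋-link of `Θ` gets an auxiliary labeled node exactly when its conclusion is a
premise of another ⅋-link. -/
def hasAux (Θ : ProofStructure) (L : MLLLink) : Prop :=
  L ∈ Θ.links ∧ ∃ l r c, L = MLLLink.par l r c ∧ premOfParLink Θ c

/-- The label contributed by an occurrence `x`: `ℓ_P` if `x` is the left premise of a
⅋-link `P`, `r_P` if `x` is the right premise of `P`. -/
def labelOfOcc (Θ : ProofStructure) (x : Occ) (d : DLabel) : Prop :=
  (∃ P, leftPremOfPar Θ x P ∧ d = DLabel.left P) ∨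
  (∃ P, rightPremOfPar Θ x P ∧ d = DLabel.right P)

/-- The labels carried by the (auxiliary) labeled node of a link `K`:
those contributed by the conclusions of `K`. -/
def linkLabel (Θ : ProofStructure) (K : MLLLink) (d : DLabel) : Prop :=
  ∃ x ∈ MLLLink.concs K, labelOfOcc Θ x d

/-- The node through which the subtree translating `K` connects upwards. -/
def OutIs (Θ : ProofStructure) (main aux : MLLLink → ℕ) (K : MLLLink) (v : ℕ) : Prop :=
  (hasAux Θ K ∧ v = aux K) ∨ (¬ hasAux Θ K ∧ v = main K)

/-- The edges of the translation. -/
def EdgeSpec (Θ : ProofStructure) (main aux : MLLLink → ℕ) (u v : ℕ) : Prop :=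
  (∃ x K M, K ∈ Θ.links ∧ M ∈ Θ.links ∧ x ∈ MLLLink.concs K ∧ x ∈ MLLLink.prems M ∧
      ¬ MLLLink.IsPar M ∧ OutIs Θ main aux K u ∧ v = main M) ∨
  (∃ K l r c, K ∈ Θ.links ∧ MLLLink.par l r c ∈ Θ.links ∧ l ∈ MLLLink.concs K ∧
      OutIs Θ main aux K u ∧ v = main (MLLLink.par l r c)) ∨
  (∃ L, hasAux Θ L ∧ u = main L ∧ v = aux L)

/-- The translation `T(Θ)` is defined: `S_∀ℓ(Θ)` is a tree, no ID-link has both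
conclusions premises of ⅋-links, and no ID-link has one conclusion a conclusion of `Θ`
while the other is a premise of a ⅋-link. -/
def TransDefined (Θ : ProofStructure) : Prop :=
  DRTreeL Θ ∧
  ∀ c1 c2, MLLLink.id c1 c2 ∈ Θ.links →
    ¬(premOfParLink Θ c1 ∧ premOfParLink Θ c2) ∧
    ¬(IsConcOfTheta Θ c1 ∧ premOfParLink Θ c2) ∧
    ¬(IsConcOfTheta Θ c2 ∧ premOfParLink Θ c1)

/-- `T` is (a copy of) the deNM-tree `T(Θ)` translating `Θ`. -/
def IsTranslation (Θ : ProofStructure) (T : PreTree) : Prop :=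
  TransDefined Θ ∧
  ∃ main aux : MLLLink → ℕ,
    (∀ L1 ∈ Θ.links, ∀ L2 ∈ Θ.links, main L1 = main L2 → L1 = L2) ∧
    (∀ L1 L2, hasAux Θ L1 → hasAux Θ L2 → aux L1 = aux L2 → L1 = L2) ∧
    (∀ L1 ∈ Θ.links, ∀ L2, hasAux Θ L2 → main L1 ≠ aux L2) ∧
    (∀ v, v ∈ T.V ↔ ((∃ L ∈ Θ.links, v = main L) ∨ (∃ L, hasAux Θ L ∧ v = aux L))) ∧
    (∀ L ∈ Θ.links, ¬ MLLLink.IsPar L →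
        ∃ s, T.kind (main L) = DNodeKind.labeled s ∧ ∀ d, d ∈ s ↔ linkLabel Θ L d) ∧
    (∀ L ∈ Θ.links, MLLLink.IsPar L → T.kind (main L) = DNodeKind.par L) ∧
    (∀ L, hasAux Θ L →
        ∃ s, T.kind (aux L) = DNodeKind.labeled s ∧ ∀ d, d ∈ s ↔ linkLabel Θ L d) ∧
    (∀ l r c, MLLLink.par l r c ∈ Θ.links →
        ∀ K ∈ Θ.links, l ∈ MLLLink.concs K →
          ∀ u, OutIs Θ main aux K u → T.upper (main (MLLLink.par l r c)) = some u) ∧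
    (∀ e, e ∈ T.edges ↔
        ∃ u v, e = s(u, v) ∧ (EdgeSpec Θ main aux u v ∨ EdgeSpec Θ main aux v u))

/-! ### The rewriting system and Algorithm A -/

def replaceN (v a : ℕ) : ℕ → ℕ := fun x => if x = v then a else x

/-- Eliminate the node `v`, letting `a` absorb the remaining connections of `v`
(used by the ⅋-elimination rule). -/
def PreTree.elimAt (T : PreTree) (v a : ℕ) : PreTree where
  V := T.V.erase v
  kind := T.kind
  edges := (T.edges.image (Sym2.map (replaceN v a))).filter (fun e => ¬ e.IsDiag)
  upper := T.upper

def mergeKind (k k' : DNodeKind) : DNodeKind :=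
  match k, k' with
  | DNodeKind.labeled s, DNodeKind.labeled s' => DNodeKind.labeled (s ∪ s')
  | k, _ => k

/-- Merge the labeled node `n'` into the labeled node `a`, taking the union of the
label sets (used by the union rule). -/
def PreTree.contract (T : PreTree) (a n' : ℕ) : PreTree where
  V := T.V.erase n'
  kind := fun x => if x = a then mergeKind (T.kind a) (T.kind n') else T.kind x
  edges := (T.edges.image (Sym2.map (replaceN n' a))).filter (fun e => ¬ e.IsDiag)
  upper := fun x => (T.upper x).map (replaceN n' a)

/-- The three rewrite rules. -/
inductive RRule : Type
  | elim | union | jump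

/-- A configuration of Algorithm A: the current deNM-tree, the active (labeled)
node, and the set of ⅋-links to which the local jump rule has been applied. -/
structure Config where
  tree : PreTree
  active : ℕ
  jumped : Finset MLLLink

/-- One application of a rewrite rule at the active node. -/
inductive Step : RRule → Config → Config → Prop
  | elim (c : Config) (v : ℕ) (L : MLLLink) (s : Finset DLabel) :
      c.active ∈ c.tree.V → v ∈ c.tree.V →
      c.tree.kind c.active = DNodeKind.labeled s →
      c.tree.kind v = DNodeKind.par L →
      c.tree.upper v = some c.active →
      s(c.active, v) ∈ c.tree.edges →
      DLabel.left L ∈ s → DLabel.right L ∈ s →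
      Step RRule.elim c
        { tree := c.tree.elimAt v c.active, active := c.active, jumped := c.jumped }
  | union (c : Config) (n' : ℕ) (s s' : Finset DLabel) :
      c.active ∈ c.tree.V → n' ∈ c.tree.V → n' ≠ c.active →
      c.tree.kind c.active = DNodeKind.labeled s →
      c.tree.kind n' = DNodeKind.labeled s' →
      s(c.active, n') ∈ c.tree.edges →
      Step RRule.union c
        { tree := c.tree.contract c.active n', active := c.active, jumped := c.jumped }
  | jump (c : Config) (v m : ℕ) (L : MLLLink) (s s' : Finset DLabel) :
      c.active ∈ c.tree.V → v ∈ c.tree.V → m ∈ c.tree.V →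
      c.tree.kind c.active = DNodeKind.labeled s →
      c.tree.kind v = DNodeKind.par L →
      s(c.active, v) ∈ c.tree.edges →
      c.tree.upper v ≠ some c.active →
      c.tree.kind m = DNodeKind.labeled s' →
      DLabel.right L ∈ s' →
      L ∉ c.jumped →
      Step RRule.jump c { tree := c.tree, active := m, jumped := insert L c.jumped }

def StepAny (c c' : Config) : Prop := ∃ r, Step r c c'

/-- No rewrite rule applies. -/
def Stuck (c : Config) : Prop := ∀ r c', ¬ Step r c c'

/-- `s` is the full label set `S_full` of `Θ`. -/
def SfullSpec (Θ : ProofStructure) (s : Finset DLabel) : Prop :=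
  ∀ d, d ∈ s ↔ ∃ l r c, MLLLink.par l r c ∈ Θ.links ∧
    (d = DLabel.left (MLLLink.par l r c) ∨ d = DLabel.right (MLLLink.par l r c))

/-- The terminal tree is a single degree-0 node labeled by `S_full`. -/
def FinalYes (Θ : ProofStructure) (c : Config) : Prop :=
  c.tree.V = {c.active} ∧ c.tree.edges = ∅ ∧
  ∃ s, c.tree.kind c.active = DNodeKind.labeled s ∧ SfullSpec Θ s

/-- Algorithm A with input `Θ` outputs yes. -/
def AlgAYes (Θ : ProofStructure) : Prop :=
  TransDefined Θ ∧
  ∀ T, IsTranslation Θ T → ∀ n, T.IsLabeledVertex n →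
    ∀ c', Relation.ReflTransGen StepAny { tree := T, active := n, jumped := ∅ } c' →
      Stuck c' → FinalYes Θ c'

/-- The local jump rule is applicable (up to the double-application check) at the
active node of `c`, targeting the ⅋-link `L`. -/
def JumpReady (c : Config) (L : MLLLink) : Prop :=
  c.active ∈ c.tree.V ∧ (∃ s, c.tree.kind c.active = DNodeKind.labeled s) ∧
  ∃ v ∈ c.tree.V, c.tree.kind v = DNodeKind.par L ∧
    s(c.active, v) ∈ c.tree.edges ∧ c.tree.upper v ≠ some c.active

/-! ## Algorithm B: data structures, reduction strategy, measure -/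

/-- The per-labeled-node data structures of Algorithm B.  Queue entries carry a
Boolean flag: `false` for elements present since the start, `true` for elements
put back by the revival mechanism. -/
structure NodeData where
  Qdown : List ℕ
  Qlab : List ℕ
  Qright : List (MLLLink × Bool)
  Sright : Finset MLLLink
  Qup : List (ℕ × Bool)
  Sup : Finset ℕ
  SUright : Finset MLLLink
  SUup : Finset ℕ

def NodeData.empty : NodeData := ⟨[], [], [], ∅, [], ∅, ∅, ∅⟩

/-- Merging the data structures of two labeled nodes (for the union rule). -/
def NodeData.merge (d d' : NodeData) : NodeData :=
  ⟨d.Qdown ++ d'.Qdown, d.Qlab ++ d'.Qlab, d.Qright ++ d'.Qright, d.Sright ∪ d'.Sright,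
   d.Qup ++ d'.Qup, d.Sup ∪ d'.Sup, d.SUright ∪ d'.SUright, d.SUup ∪ d'.SUup⟩

/-- A configuration of Algorithm B: the current deNM-tree, the active node, the
data structures, the representative (integrating node) of every merged node, and
the ⅋-links already visited by the local jump rule. -/
structure ConfigB where
  tree : PreTree
  active : ℕ
  data : ℕ → NodeData
  rep : ℕ → ℕ
  visited : Finset MLLLink

/-- The initial data structures associated to the deNM-tree `T(Θ)`. -/
def InitData (T : PreTree) (data : ℕ → NodeData) : Prop :=
  ∀ n,
    (T.IsLabeledVertex n →
      ((data n).Qdown.Nodup ∧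
        (∀ v, v ∈ (data n).Qdown ↔
          (v ∈ T.V ∧ (∃ L, T.kind v = DNodeKind.par L) ∧ s(n, v) ∈ T.edges ∧
            T.upper v ≠ some n))) ∧
      ((data n).Qlab.Nodup ∧
        (∀ m, m ∈ (data n).Qlab ↔
          (m ∈ T.V ∧ (∃ s, T.kind m = DNodeKind.labeled s) ∧ s(n, m) ∈ T.edges))) ∧
      ((data n).Qright.Nodup ∧
        (∀ L b, (L, b) ∈ (data n).Qright ↔
          (b = false ∧ ∃ s, T.kind n = DNodeKind.labeled s ∧ DLabel.right L ∈ s))) ∧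
      ((data n).Qup.Nodup ∧
        (∀ v b, (v, b) ∈ (data n).Qup ↔
          (b = false ∧ v ∈ T.V ∧ (∃ L, T.kind v = DNodeKind.par L) ∧ T.upper v = some n))) ∧
      (data n).Sright = ∅ ∧ (data n).Sup = ∅ ∧ (data n).SUright = ∅ ∧ (data n).SUup = ∅) ∧
    (¬ T.IsLabeledVertex n → data n = NodeData.empty)

/-- `Q_down` of the active node contains no live ⅋-node any more. -/
def QdownExhausted (c : ConfigB) : Prop :=
  ∀ v ∈ (c.data c.active).Qdown, v ∉ c.tree.V

/-- `Q_labeled` of the active node contains only (merged copies of) the active node. -/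
def QlabExhausted (c : ConfigB) : Prop :=
  ∀ m ∈ (c.data c.active).Qlab, c.rep m = c.active

def jumpUpdate (c : ConfigB) (rest : List ℕ) (m : ℕ) : ℕ → NodeData :=
  let d1 := Function.update c.data c.active { c.data c.active with Qdown := rest }
  Function.update d1 m
    { d1 m with
      SUright := (d1 m).SUright ∪ (d1 c.active).SUright
      SUup := (d1 m).SUup ∪ (d1 c.active).SUup }

def unionUpdate (c : ConfigB) (rest : List ℕ) (m : ℕ) : ℕ → NodeData :=
  Function.update (Function.update c.data m NodeData.empty) c.active
    (NodeData.merge { c.data c.active with Qlab := rest } (c.data m))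

def repUpdate (rep : ℕ → ℕ) (m a : ℕ) : ℕ → ℕ := fun x => if rep x = m then a else rep x

def elimRightUpdate1 (c : ConfigB) (rest : List (MLLLink × Bool)) : ℕ → NodeData :=
  Function.update c.data c.active { c.data c.active with Qright := rest }

def elimRightUpdate2 (c : ConfigB) (rest : List (MLLLink × Bool)) (w : ℕ) : ℕ → NodeData :=
  Function.update c.data c.active
    { c.data c.active with Qright := rest, Qlab := (c.data c.active).Qlab ++ [w] }

def reviveUpUpdate (c : ConfigB) (rest : List (MLLLink × Bool)) (L : MLLLink) (w v : ℕ) :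
    ℕ → NodeData :=
  let d1 := Function.update c.data c.active
    { c.data c.active with
      Qright := rest
      Sright := insert L (c.data c.active).Sright
      SUright := insert L (c.data c.active).SUright }
  Function.update d1 w { d1 w with Qup := (d1 w).Qup ++ [(v, true)] }

def stashRightUpdate (c : ConfigB) (rest : List (MLLLink × Bool)) (L : MLLLink) :
    ℕ → NodeData :=
  Function.update c.data c.active
    { c.data c.active with
      Qright := rest
      Sright := insert L (c.data c.active).Sright
      SUright := insert L (c.data c.active).SUright }

def elimUpUpdate1 (c : ConfigB) (rest : List (ℕ × Bool)) : ℕ → NodeData :=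
  Function.update c.data c.active { c.data c.active with Qup := rest }

def elimUpUpdate2 (c : ConfigB) (rest : List (ℕ × Bool)) (w : ℕ) : ℕ → NodeData :=
  Function.update c.data c.active
    { c.data c.active with Qup := rest, Qlab := (c.data c.active).Qlab ++ [w] }

def reviveRightUpdate (c : ConfigB) (rest : List (ℕ × Bool)) (v : ℕ) (L : MLLLink) (w : ℕ) :
    ℕ → NodeData :=
  let d1 := Function.update c.data c.active
    { c.data c.active with
      Qup := rest
      Sup := insert v (c.data c.active).Sup
      SUup := insert v (c.data c.active).SUup }
  Function.update d1 w { d1 w with Qright := (d1 w).Qright ++ [(L, true)] }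

def stashUpUpdate (c : ConfigB) (rest : List (ℕ × Bool)) (v : ℕ) : ℕ → NodeData :=
  Function.update c.data c.active
    { c.data c.active with
      Qup := rest
      Sup := insert v (c.data c.active).Sup
      SUup := insert v (c.data c.active).SUup }

/-- One step of Algorithm B, following the reduction strategy. -/
inductive StepB : ConfigB → ConfigB → Prop
  /-- Local jump on the first live element of `Q_down`; the merged sets of the old
  active node are merged into those of the new active node. -/
  | jump (c : ConfigB) (junk : List ℕ) (v : ℕ) (rest : List ℕ) (m : ℕ) (L : MLLLink)
      (s : Finset DLabel) :
      c.active ∈ c.tree.V →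
      (c.data c.active).Qdown = junk ++ v :: rest →
      (∀ u ∈ junk, u ∉ c.tree.V) →
      v ∈ c.tree.V →
      c.tree.kind v = DNodeKind.par L →
      L ∉ c.visited →
      m ∈ c.tree.V →
      c.tree.kind m = DNodeKind.labeled s →
      DLabel.right L ∈ s →
      StepB c
        { tree := c.tree, active := m, data := jumpUpdate c rest m, rep := c.rep,
          visited := insert L c.visited }
  /-- Union with the first element of `Q_labeled` not denoting the active node itself. -/
  | union (c : ConfigB) (junk : List ℕ) (y : ℕ) (rest : List ℕ) (m : ℕ)
      (s s' : Finset DLabel) :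
      c.active ∈ c.tree.V →
      QdownExhausted c →
      (c.data c.active).Qlab = junk ++ y :: rest →
      (∀ z ∈ junk, c.rep z = c.active) →
      c.rep y = m → m ≠ c.active → m ∈ c.tree.V →
      c.tree.kind c.active = DNodeKind.labeled s →
      c.tree.kind m = DNodeKind.labeled s' →
      s(c.active, m) ∈ c.tree.edges →
      StepB c
        { tree := c.tree.contract c.active m, active := c.active,
          data := unionUpdate c rest m, rep := repUpdate c.rep m c.active,
          visited := c.visited }
  /-- ⅋-elimination triggered by the head `r_L` of `Q_right` (the ⅋-node has no
  node below). -/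
  | elimRight1 (c : ConfigB) (L : MLLLink) (b : Bool) (rest : List (MLLLink × Bool))
      (v : ℕ) (s : Finset DLabel) :
      c.active ∈ c.tree.V → QdownExhausted c → QlabExhausted c →
      (c.data c.active).Qright = (L, b) :: rest →
      v ∈ (c.data c.active).Sup →
      v ∈ c.tree.V →
      c.tree.kind v = DNodeKind.par L →
      c.tree.upper v = some c.active →
      s(c.active, v) ∈ c.tree.edges →
      c.tree.kind c.active = DNodeKind.labeled s →
      DLabel.left L ∈ s → DLabel.right L ∈ s →
      (∀ w, s(v, w) ∈ c.tree.edges → w = c.active) →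
      StepB c
        { tree := c.tree.elimAt v c.active, active := c.active,
          data := elimRightUpdate1 c rest, rep := c.rep, visited := c.visited }
  /-- ⅋-elimination triggered by the head `r_L` of `Q_right`; the labeled node `w`
  below the ⅋-node is appended to `Q_labeled`. -/
  | elimRight2 (c : ConfigB) (L : MLLLink) (b : Bool) (rest : List (MLLLink × Bool))
      (v w : ℕ) (s : Finset DLabel) :
      c.active ∈ c.tree.V → QdownExhausted c → QlabExhausted c →
      (c.data c.active).Qright = (L, b) :: rest →
      v ∈ (c.data c.active).Sup →
      v ∈ c.tree.V →
      c.tree.kind v = DNodeKind.par L →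
      c.tree.upper v = some c.active →
      s(c.active, v) ∈ c.tree.edges →
      c.tree.kind c.active = DNodeKind.labeled s →
      DLabel.left L ∈ s → DLabel.right L ∈ s →
      s(v, w) ∈ c.tree.edges → w ≠ c.active → w ≠ v →
      StepB c
        { tree := c.tree.elimAt v c.active, active := c.active,
          data := elimRightUpdate2 c rest w, rep := c.rep, visited := c.visited }
  /-- The head `r_L` of `Q_right` has no partner in `S_up`, but the ⅋-node of `L`
  is recorded in some merged up port set: revival of the ⅋-node into `Q_up`. -/
  | reviveUp (c : ConfigB) (L : MLLLink) (b : Bool) (rest : List (MLLLink × Bool))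
      (w v : ℕ) :
      c.active ∈ c.tree.V → QdownExhausted c → QlabExhausted c →
      (c.data c.active).Qright = (L, b) :: rest →
      (∀ v' ∈ (c.data c.active).Sup, c.tree.kind v' ≠ DNodeKind.par L) →
      w ∈ c.tree.V → v ∈ (c.data w).SUup → c.tree.kind v = DNodeKind.par L →
      StepB c
        { tree := c.tree, active := c.active, data := reviveUpUpdate c rest L w v,
          rep := c.rep, visited := c.visited }
  /-- The head `r_L` of `Q_right` has no partner at all: it is moved to `S_right`
  and `S_∪right`. -/
  | stashRight (c : ConfigB) (L : MLLLink) (b : Bool) (rest : List (MLLLink × Bool)) :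
      c.active ∈ c.tree.V → QdownExhausted c → QlabExhausted c →
      (c.data c.active).Qright = (L, b) :: rest →
      (∀ v' ∈ (c.data c.active).Sup, c.tree.kind v' ≠ DNodeKind.par L) →
      (∀ w ∈ c.tree.V, ∀ v, v ∈ (c.data w).SUup → c.tree.kind v ≠ DNodeKind.par L) →
      StepB c
        { tree := c.tree, active := c.active, data := stashRightUpdate c rest L,
          rep := c.rep, visited := c.visited }
  /-- ⅋-elimination triggered by the head of `Q_up` (no node below the ⅋-node). -/
  | elimUp1 (c : ConfigB) (v : ℕ) (b : Bool) (rest : List (ℕ × Bool)) (L : MLLLink)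
      (s : Finset DLabel) :
      c.active ∈ c.tree.V → QdownExhausted c → QlabExhausted c →
      (c.data c.active).Qright = [] →
      (c.data c.active).Qup = (v, b) :: rest →
      c.tree.kind v = DNodeKind.par L →
      L ∈ (c.data c.active).Sright →
      v ∈ c.tree.V →
      c.tree.upper v = some c.active →
      s(c.active, v) ∈ c.tree.edges →
      c.tree.kind c.active = DNodeKind.labeled s →
      DLabel.left L ∈ s → DLabel.right L ∈ s →
      (∀ w, s(v, w) ∈ c.tree.edges → w = c.active) →
      StepB c
        { tree := c.tree.elimAt v c.active, active := c.active,
          data := elimUpUpdate1 c rest, rep := c.rep, visited := c.visited }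
  /-- ⅋-elimination triggered by the head of `Q_up`; the labeled node `w` below the
  ⅋-node is appended to `Q_labeled`. -/
  | elimUp2 (c : ConfigB) (v : ℕ) (b : Bool) (rest : List (ℕ × Bool)) (L : MLLLink)
      (w : ℕ) (s : Finset DLabel) :
      c.active ∈ c.tree.V → QdownExhausted c → QlabExhausted c →
      (c.data c.active).Qright = [] →
      (c.data c.active).Qup = (v, b) :: rest →
      c.tree.kind v = DNodeKind.par L →
      L ∈ (c.data c.active).Sright →
      v ∈ c.tree.V →
      c.tree.upper v = some c.active →
      s(c.active, v) ∈ c.tree.edges →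
      c.tree.kind c.active = DNodeKind.labeled s →
      DLabel.left L ∈ s → DLabel.right L ∈ s →
      s(v, w) ∈ c.tree.edges → w ≠ c.active → w ≠ v →
      StepB c
        { tree := c.tree.elimAt v c.active, active := c.active,
          data := elimUpUpdate2 c rest w, rep := c.rep, visited := c.visited }
  /-- The head `v` (for the ⅋-link `L`) of `Q_up` has no partner in `S_right`, but
  `r_L` is recorded in some merged right premise label set: revival of `r_L` into
  `Q_right`. -/
  | reviveRight (c : ConfigB) (v : ℕ) (b : Bool) (rest : List (ℕ × Bool)) (L : MLLLink)
      (w : ℕ) :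
      c.active ∈ c.tree.V → QdownExhausted c → QlabExhausted c →
      (c.data c.active).Qright = [] →
      (c.data c.active).Qup = (v, b) :: rest →
      c.tree.kind v = DNodeKind.par L →
      L ∉ (c.data c.active).Sright →
      w ∈ c.tree.V → L ∈ (c.data w).SUright →
      StepB c
        { tree := c.tree, active := c.active, data := reviveRightUpdate c rest v L w,
          rep := c.rep, visited := c.visited }
  /-- The head of `Q_up` has no partner at all: it is moved to `S_up` and `S_∪up`. -/
  | stashUp (c : ConfigB) (v : ℕ) (b : Bool) (rest : List (ℕ × Bool)) (L : MLLLink) :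
      c.active ∈ c.tree.V → QdownExhausted c → QlabExhausted c →
      (c.data c.active).Qright = [] →
      (c.data c.active).Qup = (v, b) :: rest →
      c.tree.kind v = DNodeKind.par L →
      L ∉ (c.data c.active).Sright →
      (∀ w ∈ c.tree.V, L ∉ (c.data w).SUright) →
      StepB c
        { tree := c.tree, active := c.active, data := stashUpUpdate c rest v,
          rep := c.rep, visited := c.visited }

/-- Algorithm B answers yes at `c`: a single degree-0 node labeled by `S_full` remains. -/
def BYes (Θ : ProofStructure) (c : ConfigB) : Prop :=
  c.tree.V = {c.active} ∧ c.tree.edges = ∅ ∧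
  ∃ s, c.tree.kind c.active = DNodeKind.labeled s ∧ SfullSpec Θ s

def StuckB (c : ConfigB) : Prop := ∀ c', ¬ StepB c c'

def initRep : ℕ → ℕ := fun x => x

/-- Algorithm B with input `Θ` answers yes. -/
def AlgBYes (Θ : ProofStructure) : Prop :=
  TransDefined Θ ∧
  ∀ T, IsTranslation Θ T → ∀ n, T.IsLabeledVertex n → ∀ data0, InitData T data0 →
    ∀ c', Relation.ReflTransGen StepB
        { tree := T, active := n, data := data0, rep := initRep, visited := ∅ } c' →
      StuckB c' → BYes Θ c'

/-- Algorithm B with input `Θ` answers no. -/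
def AlgBNo (Θ : ProofStructure) : Prop :=
  ¬ TransDefined Θ ∨
  ∀ T, IsTranslation Θ T → ∀ n, T.IsLabeledVertex n → ∀ data0, InitData T data0 →
    ∀ c', Relation.ReflTransGen StepB
        { tree := T, active := n, data := data0, rep := initRep, visited := ∅ } c' →
      StuckB c' → ¬ BYes Θ c'

/-- `v` is a ⅋-node not yet visited by the local jump rule. -/
def parUnvisited (c : ConfigB) (v : ℕ) : Bool :=
  match c.tree.kind v with
  | DNodeKind.par L => decide (L ∉ c.visited)
  | _ => false

/-- The termination measure `(m1 + m2 + m3 + m4, n1 + n2)` of Algorithm B. -/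
def measureB (c : ConfigB) : ℕ × ℕ :=
  (c.tree.V.card
      + (c.tree.V.filter (fun v => parUnvisited c v = true)).card
      + (∑ v ∈ c.tree.V, ((c.data v).Qup.filter (fun p => !p.2)).length)
      + (∑ v ∈ c.tree.V, ((c.data v).Qright.filter (fun p => !p.2)).length),
    (∑ v ∈ c.tree.V, ((c.data v).Qup.filter (fun p => p.2)).length)
      + (∑ v ∈ c.tree.V, ((c.data v).Qright.filter (fun p => p.2)).length))

/-! ### Auxiliary lemmas for the invariant proof -/

section FieldLemmas
variable (c : ConfigB)

lemma jumpUpdate_Qup (rest : List ℕ) (m x : ℕ) :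
    (jumpUpdate c rest m x).Qup = (c.data x).Qup := by
  simp only [jumpUpdate, Function.update_apply]; split_ifs <;> simp_all

lemma jumpUpdate_Qright (rest : List ℕ) (m x : ℕ) :
    (jumpUpdate c rest m x).Qright = (c.data x).Qright := by
  simp only [jumpUpdate, Function.update_apply]; split_ifs <;> simp_all

lemma jumpUpdate_SUup (rest : List ℕ) (m x : ℕ) :
    (jumpUpdate c rest m x).SUup =
      if x = m then (c.data m).SUup ∪ (c.data c.active).SUup else (c.data x).SUup := by
  simp only [jumpUpdate, Function.update_apply]; split_ifs <;> simp_all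

lemma jumpUpdate_SUright (rest : List ℕ) (m x : ℕ) :
    (jumpUpdate c rest m x).SUright =
      if x = m then (c.data m).SUright ∪ (c.data c.active).SUright
      else (c.data x).SUright := by
  simp only [jumpUpdate, Function.update_apply]; split_ifs <;> simp_all

lemma unionUpdate_Qup (rest : List ℕ) (m x : ℕ) (hm : m ≠ c.active) :
    (unionUpdate c rest m x).Qup =
      if x = c.active then (c.data c.active).Qup ++ (c.data m).Qup
      else if x = m then [] else (c.data x).Qup := by
  simp only [unionUpdate, Function.update_apply, NodeData.merge, NodeData.empty]
  split_ifs <;> simp_all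

lemma unionUpdate_Qright (rest : List ℕ) (m x : ℕ) (hm : m ≠ c.active) :
    (unionUpdate c rest m x).Qright =
      if x = c.active then (c.data c.active).Qright ++ (c.data m).Qright
      else if x = m then [] else (c.data x).Qright := by
  simp only [unionUpdate, Function.update_apply, NodeData.merge, NodeData.empty]
  split_ifs <;> simp_all

lemma unionUpdate_SUup (rest : List ℕ) (m x : ℕ) (hm : m ≠ c.active) :
    (unionUpdate c rest m x).SUup =
      if x = c.active then (c.data c.active).SUup ∪ (c.data m).SUup
      else if x = m then ∅ else (c.data x).SUup := by
  simp only [unionUpdate, Function.update_apply, NodeData.merge, NodeData.empty]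
  split_ifs <;> simp_all

lemma unionUpdate_SUright (rest : List ℕ) (m x : ℕ) (hm : m ≠ c.active) :
    (unionUpdate c rest m x).SUright =
      if x = c.active then (c.data c.active).SUright ∪ (c.data m).SUright
      else if x = m then ∅ else (c.data x).SUright := by
  simp only [unionUpdate, Function.update_apply, NodeData.merge, NodeData.empty]
  split_ifs <;> simp_all

lemma elimRightUpdate1_Qup (rest x) : (elimRightUpdate1 c rest x).Qup = (c.data x).Qup := by
  simp only [elimRightUpdate1, Function.update_apply]; split_ifs <;> simp_all

lemma elimRightUpdate1_Qright (rest x) :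
    (elimRightUpdate1 c rest x).Qright =
      if x = c.active then rest else (c.data x).Qright := by
  simp only [elimRightUpdate1, Function.update_apply]; split_ifs <;> simp_all

lemma elimRightUpdate1_SUup (rest x) :
    (elimRightUpdate1 c rest x).SUup = (c.data x).SUup := by
  simp only [elimRightUpdate1, Function.update_apply]; split_ifs <;> simp_all

lemma elimRightUpdate1_SUright (rest x) :
    (elimRightUpdate1 c rest x).SUright = (c.data x).SUright := by
  simp only [elimRightUpdate1, Function.update_apply]; split_ifs <;> simp_all

lemma elimRightUpdate2_Qup (rest w x) :
    (elimRightUpdate2 c rest w x).Qup = (c.data x).Qup := by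
  simp only [elimRightUpdate2, Function.update_apply]; split_ifs <;> simp_all

lemma elimRightUpdate2_Qright (rest w x) :
    (elimRightUpdate2 c rest w x).Qright =
      if x = c.active then rest else (c.data x).Qright := by
  simp only [elimRightUpdate2, Function.update_apply]; split_ifs <;> simp_all

lemma elimRightUpdate2_SUup (rest w x) :
    (elimRightUpdate2 c rest w x).SUup = (c.data x).SUup := by
  simp only [elimRightUpdate2, Function.update_apply]; split_ifs <;> simp_all

lemma elimRightUpdate2_SUright (rest w x) :
    (elimRightUpdate2 c rest w x).SUright = (c.data x).SUright := by
  simp only [elimRightUpdate2, Function.update_apply]; split_ifs <;> simp_all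

lemma reviveUpUpdate_Qup (rest L w v x) :
    (reviveUpUpdate c rest L w v x).Qup =
      if x = w then (c.data x).Qup ++ [(v, true)] else (c.data x).Qup := by
  simp only [reviveUpUpdate, Function.update_apply]; split_ifs <;> simp_all

lemma reviveUpUpdate_Qright (rest L w v x) :
    (reviveUpUpdate c rest L w v x).Qright =
      if x = c.active then rest else (c.data x).Qright := by
  simp only [reviveUpUpdate, Function.update_apply]; split_ifs <;> simp_all

lemma reviveUpUpdate_SUup (rest L w v x) :
    (reviveUpUpdate c rest L w v x).SUup = (c.data x).SUup := by
  simp only [reviveUpUpdate, Function.update_apply]; split_ifs <;> simp_all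

lemma reviveUpUpdate_SUright (rest L w v x) :
    (reviveUpUpdate c rest L w v x).SUright =
      if x = c.active then insert L (c.data x).SUright else (c.data x).SUright := by
  simp only [reviveUpUpdate, Function.update_apply]; split_ifs <;> simp_all

lemma stashRightUpdate_Qup (rest L x) :
    (stashRightUpdate c rest L x).Qup = (c.data x).Qup := by
  simp only [stashRightUpdate, Function.update_apply]; split_ifs <;> simp_all

lemma stashRightUpdate_Qright (rest L x) :
    (stashRightUpdate c rest L x).Qright =
      if x = c.active then rest else (c.data x).Qright := by
  simp only [stashRightUpdate, Function.update_apply]; split_ifs <;> simp_all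

lemma stashRightUpdate_SUup (rest L x) :
    (stashRightUpdate c rest L x).SUup = (c.data x).SUup := by
  simp only [stashRightUpdate, Function.update_apply]; split_ifs <;> simp_all

lemma stashRightUpdate_SUright (rest L x) :
    (stashRightUpdate c rest L x).SUright =
      if x = c.active then insert L (c.data x).SUright else (c.data x).SUright := by
  simp only [stashRightUpdate, Function.update_apply]; split_ifs <;> simp_all

lemma elimUpUpdate1_Qup (rest x) :
    (elimUpUpdate1 c rest x).Qup =
      if x = c.active then rest else (c.data x).Qup := by
  simp only [elimUpUpdate1, Function.update_apply]; split_ifs <;> simp_all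

lemma elimUpUpdate1_Qright (rest x) :
    (elimUpUpdate1 c rest x).Qright = (c.data x).Qright := by
  simp only [elimUpUpdate1, Function.update_apply]; split_ifs <;> simp_all

lemma elimUpUpdate1_SUup (rest x) :
    (elimUpUpdate1 c rest x).SUup = (c.data x).SUup := by
  simp only [elimUpUpdate1, Function.update_apply]; split_ifs <;> simp_all

lemma elimUpUpdate1_SUright (rest x) :
    (elimUpUpdate1 c rest x).SUright = (c.data x).SUright := by
  simp only [elimUpUpdate1, Function.update_apply]; split_ifs <;> simp_all

lemma elimUpUpdate2_Qup (rest w x) :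
    (elimUpUpdate2 c rest w x).Qup =
      if x = c.active then rest else (c.data x).Qup := by
  simp only [elimUpUpdate2, Function.update_apply]; split_ifs <;> simp_all

lemma elimUpUpdate2_Qright (rest w x) :
    (elimUpUpdate2 c rest w x).Qright = (c.data x).Qright := by
  simp only [elimUpUpdate2, Function.update_apply]; split_ifs <;> simp_all

lemma elimUpUpdate2_SUup (rest w x) :
    (elimUpUpdate2 c rest w x).SUup = (c.data x).SUup := by
  simp only [elimUpUpdate2, Function.update_apply]; split_ifs <;> simp_all

lemma elimUpUpdate2_SUright (rest w x) :
    (elimUpUpdate2 c rest w x).SUright = (c.data x).SUright := by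
  simp only [elimUpUpdate2, Function.update_apply]; split_ifs <;> simp_all

lemma reviveRightUpdate_Qup (rest v L w x) :
    (reviveRightUpdate c rest v L w x).Qup =
      if x = c.active then rest else (c.data x).Qup := by
  simp only [reviveRightUpdate, Function.update_apply]; split_ifs <;> simp_all

lemma reviveRightUpdate_Qright (rest v L w x) :
    (reviveRightUpdate c rest v L w x).Qright =
      if x = w then (c.data x).Qright ++ [(L, true)] else (c.data x).Qright := by
  simp only [reviveRightUpdate, Function.update_apply]; split_ifs <;> simp_all

lemma reviveRightUpdate_SUup (rest v L w x) :
    (reviveRightUpdate c rest v L w x).SUup =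
      if x = c.active then insert v (c.data x).SUup else (c.data x).SUup := by
  simp only [reviveRightUpdate, Function.update_apply]; split_ifs <;> simp_all

lemma reviveRightUpdate_SUright (rest v L w x) :
    (reviveRightUpdate c rest v L w x).SUright = (c.data x).SUright := by
  simp only [reviveRightUpdate, Function.update_apply]; split_ifs <;> simp_all

lemma stashUpUpdate_Qup (rest v x) :
    (stashUpUpdate c rest v x).Qup =
      if x = c.active then rest else (c.data x).Qup := by
  simp only [stashUpUpdate, Function.update_apply]; split_ifs <;> simp_all

lemma stashUpUpdate_Qright (rest v x) :
    (stashUpUpdate c rest v x).Qright = (c.data x).Qright := by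
  simp only [stashUpUpdate, Function.update_apply]; split_ifs <;> simp_all

lemma stashUpUpdate_SUup (rest v x) :
    (stashUpUpdate c rest v x).SUup =
      if x = c.active then insert v (c.data x).SUup else (c.data x).SUup := by
  simp only [stashUpUpdate, Function.update_apply]; split_ifs <;> simp_all

lemma stashUpUpdate_SUright (rest v x) :
    (stashUpUpdate c rest v x).SUright = (c.data x).SUright := by
  simp only [stashUpUpdate, Function.update_apply]; split_ifs <;> simp_all

end FieldLemmas

lemma elimAt_V (T : PreTree) (v a : ℕ) : (T.elimAt v a).V = T.V.erase v := rfl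
lemma elimAt_kind (T : PreTree) (v a x : ℕ) : (T.elimAt v a).kind x = T.kind x := rfl
lemma contract_V (T : PreTree) (a m : ℕ) : (T.contract a m).V = T.V.erase m := rfl
lemma contract_kind (T : PreTree) (a m x : ℕ) :
    (T.contract a m).kind x =
      if x = a then mergeKind (T.kind a) (T.kind m) else T.kind x := rfl
/-- `L` is in the queue `Q_up` of a live labeled node. -/
def WUp (c : ConfigB) (v : ℕ) : Prop :=
  ∃ w ∈ c.tree.V, (∃ s, c.tree.kind w = DNodeKind.labeled s) ∧
    ∃ b, (v, b) ∈ (c.data w).Qup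

def WRight (c : ConfigB) (L : MLLLink) : Prop :=
  ∃ w ∈ c.tree.V, (∃ s, c.tree.kind w = DNodeKind.labeled s) ∧
    ∃ b, (L, b) ∈ (c.data w).Qright

def SUpW (c : ConfigB) (v : ℕ) : Prop := ∃ w ∈ c.tree.V, v ∈ (c.data w).SUup

def SRightW (c : ConfigB) (L : MLLLink) : Prop := ∃ w ∈ c.tree.V, L ∈ (c.data w).SUright

/-- The global invariant of Algorithm B. -/
structure InvB (T : PreTree) (c : ConfigB) : Prop where
  kindIff : ∀ x L, c.tree.kind x = DNodeKind.par L ↔ T.kind x = DNodeKind.par L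
  vsub : ∀ x, x ∈ c.tree.V → x ∈ T.V
  srcOk : ∀ w v, ((∃ b, (v, b) ∈ (c.data w).Qup) ∨ v ∈ (c.data w).SUup) → v ∈ T.V
  labOk : ∀ w ∈ c.tree.V,
    ((c.data w).Qup ≠ [] ∨ (c.data w).Qright ≠ [] ∨ (c.data w).SUup ≠ ∅ ∨
      (c.data w).SUright ≠ ∅) →
    ∃ s, c.tree.kind w = DNodeKind.labeled s
  inv1 : ∀ v ∈ c.tree.V, ∀ L, c.tree.kind v = DNodeKind.par L → WUp c v ∨ SUpW c v
  inv2 : ∀ v ∈ c.tree.V, ∀ L, c.tree.kind v = DNodeKind.par L → WRight c L ∨ SRightW c L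
  inv3 : ∀ v ∈ c.tree.V, ∀ L, c.tree.kind v = DNodeKind.par L → WUp c v ∨ WRight c L

/-- Injectivity of the ⅋-kind on the vertices of a deNM-tree. -/
def TInj (T : PreTree) : Prop :=
  ∀ v1 ∈ T.V, ∀ v2 ∈ T.V, ∀ L, T.kind v1 = DNodeKind.par L →
    T.kind v2 = DNodeKind.par L → v1 = v2

lemma par_struct {Θ : ProofStructure} {T : PreTree} (hT : IsTranslation Θ T)
    {main aux : MLLLink → ℕ}
    (hV : ∀ v, v ∈ T.V ↔
      ((∃ L ∈ Θ.links, v = main L) ∨ (∃ L, hasAux Θ L ∧ v = aux L)))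
    (hnp : ∀ L ∈ Θ.links, ¬ MLLLink.IsPar L →
      ∃ s, T.kind (main L) = DNodeKind.labeled s ∧ ∀ d, d ∈ s ↔ linkLabel Θ L d)
    (hp : ∀ L ∈ Θ.links, MLLLink.IsPar L → T.kind (main L) = DNodeKind.par L)
    (hax : ∀ L, hasAux Θ L →
      ∃ s, T.kind (aux L) = DNodeKind.labeled s ∧ ∀ d, d ∈ s ↔ linkLabel Θ L d) :
    ∀ v ∈ T.V, ∀ L, T.kind v = DNodeKind.par L →
      L ∈ Θ.links ∧ v = main L ∧ ∃ l r cc, L = MLLLink.par l r cc := by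
  intro v hv L hk
  rcases (hV v).1 hv with ⟨L', hL', rfl⟩ | ⟨L', hL', rfl⟩
  · by_cases hip : MLLLink.IsPar L'
    · have h1 := hp L' hL' hip
      rw [hk] at h1
      injection h1 with h1
      subst h1
      refine ⟨hL', rfl, ?_⟩
      cases L with
      | id c1 c2 => exact absurd hip (by simp [MLLLink.IsPar])
      | tensor l r cc => exact absurd hip (by simp [MLLLink.IsPar])
      | par l r cc => exact ⟨l, r, cc, rfl⟩
    · obtain ⟨s, hs, -⟩ := hnp L' hL' hip
      rw [hk] at hs; exact absurd hs (by simp)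
  · obtain ⟨s, hs, -⟩ := hax L' hL'
    rw [hk] at hs; exact absurd hs (by simp)

lemma tinj_of_translation {Θ : ProofStructure} {T : PreTree} (hT : IsTranslation Θ T) :
    TInj T := by
  obtain ⟨htd, main, aux, hmi, hai, hma, hV, hnp, hp, hax, hup, hed⟩ := hT
  intro v1 h1 v2 h2 L hk1 hk2
  obtain ⟨-, e1, -⟩ := par_struct ⟨htd, main, aux, hmi, hai, hma, hV, hnp, hp, hax, hup, hed⟩
    hV hnp hp hax v1 h1 L hk1
  obtain ⟨-, e2, -⟩ := par_struct ⟨htd, main, aux, hmi, hai, hma, hV, hnp, hp, hax, hup, hed⟩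
    hV hnp hp hax v2 h2 L hk2
  rw [e1, e2]
lemma inv_init {Θ : ProofStructure} {T : PreTree} (hT : IsTranslation Θ T)
    {data0 : ℕ → NodeData} (hd : InitData T data0) (n : ℕ) :
    InvB T { tree := T, active := n, data := data0, rep := initRep, visited := ∅ } := by
  obtain ⟨htd, main, aux, hmi, hai, hma, hV, hnp, hp, hax, hup, hed⟩ := hT
  have hps := par_struct ⟨htd, main, aux, hmi, hai, hma, hV, hnp, hp, hax, hup, hed⟩
    hV hnp hp hax
  set c0 : ConfigB := (⟨T, n, data0, initRep, ∅⟩ : ConfigB) with hc0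
  have hct : c0.tree = T := rfl
  have hcd : c0.data = data0 := rfl
  have outNode : ∀ K ∈ Θ.links, ∀ x ∈ MLLLink.concs K, premOfParLink Θ x →
      ∃ u ∈ T.V, ∃ s, T.kind u = DNodeKind.labeled s ∧
        (∀ d, d ∈ s ↔ linkLabel Θ K d) ∧ OutIs Θ main aux K u := by
    intro K hK x hx hprem
    by_cases ha : hasAux Θ K
    · obtain ⟨s, hs, hiff⟩ := hax K ha
      exact ⟨aux K, (hV _).2 (Or.inr ⟨K, ha, rfl⟩), s, hs, hiff, Or.inl ⟨ha, rfl⟩⟩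
    · have hnip : ¬ MLLLink.IsPar K := by
        intro hip
        apply ha
        cases K with
        | id c1 c2 => exact absurd hip (by simp [MLLLink.IsPar])
        | tensor l r cc => exact absurd hip (by simp [MLLLink.IsPar])
        | par l r cc =>
          have hxc : x = cc := by simpa [MLLLink.concs] using hx
          exact ⟨hK, l, r, cc, rfl, hxc ▸ hprem⟩
      obtain ⟨s, hs, hiff⟩ := hnp K hK hnip
      exact ⟨main K, (hV _).2 (Or.inl ⟨K, hK, rfl⟩), s, hs, hiff, Or.inr ⟨ha, rfl⟩⟩
  have hWup : ∀ l r cc, MLLLink.par l r cc ∈ Θ.links →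
      WUp c0 (main (MLLLink.par l r cc)) := by
    intro l r cc hL
    obtain ⟨K, hK, hne, hlK⟩ := Θ.premIsConc _ hL l (by simp [MLLLink.prems])
    obtain ⟨u, huV, s, hus, hiff, hout⟩ := outNode K hK l hlK
      ⟨MLLLink.par l r cc, Or.inl ⟨hL, r, cc, rfl⟩⟩
    have hupper := hup l r cc hL K hK hlK u hout
    have hulab : T.IsLabeledVertex u := ⟨huV, s, hus⟩
    obtain ⟨-, -, -, ⟨-, hQup⟩, -⟩ := (hd u).1 hulab
    have hmV : main (MLLLink.par l r cc) ∈ T.V :=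
      (hV _).2 (Or.inl ⟨_, hL, rfl⟩)
    have hmk : T.kind (main (MLLLink.par l r cc)) = DNodeKind.par (MLLLink.par l r cc) :=
      hp _ hL (by simp [MLLLink.IsPar])
    exact ⟨u, huV, ⟨s, hus⟩, false, (hQup _ false).2 ⟨rfl, hmV, ⟨_, hmk⟩, hupper⟩⟩
  have hWright : ∀ l r cc, MLLLink.par l r cc ∈ Θ.links →
      WRight c0 (MLLLink.par l r cc) := by
    intro l r cc hL
    obtain ⟨K, hK, hne, hrK⟩ := Θ.premIsConc _ hL r (by simp [MLLLink.prems])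
    obtain ⟨u, huV, s, hus, hiff, hout⟩ := outNode K hK r hrK
      ⟨MLLLink.par l r cc, Or.inr ⟨hL, l, cc, rfl⟩⟩
    have hulab : T.IsLabeledVertex u := ⟨huV, s, hus⟩
    obtain ⟨-, -, ⟨-, hQright⟩, -⟩ := (hd u).1 hulab
    have hrin : DLabel.right (MLLLink.par l r cc) ∈ s :=
      (hiff _).2 ⟨r, hrK, Or.inr ⟨_, ⟨hL, l, cc, rfl⟩, rfl⟩⟩
    exact ⟨u, huV, ⟨s, hus⟩, false, (hQright _ false).2 ⟨rfl, s, hus, hrin⟩⟩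
  refine ⟨fun _ _ => Iff.rfl, fun _ h => h, ?_, ?_, ?_, ?_, ?_⟩
  · -- srcOk
    intro w v hv
    rw [hcd] at hv
    by_cases hw : T.IsLabeledVertex w
    · have hQup := ((hd w).1 hw).2.2.2.1.2
      have hSU : (data0 w).SUup = ∅ := ((hd w).1 hw).2.2.2.2.2.2.2
      rcases hv with ⟨b, hb⟩ | hsu
      · exact ((hQup v b).1 hb).2.1
      · rw [hSU] at hsu; simp at hsu
    · rw [(hd w).2 hw] at hv
      rcases hv with ⟨b, hb⟩ | hsu
      · simp [NodeData.empty] at hb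
      · simp [NodeData.empty] at hsu
  · -- labOk
    intro w hw hne
    rw [hcd] at hne
    by_cases hlw : T.IsLabeledVertex w
    · exact hlw.2
    · rw [(hd w).2 hlw] at hne
      simp [NodeData.empty] at hne
  · intro v hv L hk
    obtain ⟨hL, rfl, l, r, cc, rfl⟩ := hps v hv L hk
    exact Or.inl (hWup l r cc hL)
  · intro v hv L hk
    obtain ⟨hL, rfl, l, r, cc, rfl⟩ := hps v hv L hk
    exact Or.inl (hWright l r cc hL)
  · intro v hv L hk
    obtain ⟨hL, rfl, l, r, cc, rfl⟩ := hps v hv L hk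
    exact Or.inl (hWup l r cc hL)
lemma lab_ne_par {T : PreTree} {w v : ℕ} {s : Finset DLabel} {L : MLLLink}
    (h1 : T.kind w = DNodeKind.labeled s) (h2 : T.kind v = DNodeKind.par L) : w ≠ v := by
  rintro rfl; rw [h1] at h2; exact DNodeKind.noConfusion h2

lemma inv_step {T : PreTree} (hinj : TInj T) {c c' : ConfigB}
    (h : InvB T c) (hs : StepB c c') : InvB T c' := by
  have liveInj : ∀ v1 ∈ c.tree.V, ∀ v2 ∈ c.tree.V, ∀ L,
      c.tree.kind v1 = DNodeKind.par L → c.tree.kind v2 = DNodeKind.par L → v1 = v2 :=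
    fun v1 h1 v2 h2 L k1 k2 =>
      hinj v1 (h.vsub _ h1) v2 (h.vsub _ h2) L ((h.kindIff _ _).1 k1) ((h.kindIff _ _).1 k2)
  cases hs with
  | jump junk v rest m L s hact hQd hjunk hvV hkv hLvis hmV hkm =>
    refine ⟨h.kindIff, h.vsub, ?_, ?_, ?_, ?_, ?_⟩
    · -- srcOk
      intro w u hu
      simp only [jumpUpdate_Qup, jumpUpdate_SUup] at hu
      rcases hu with ⟨b, hb⟩ | hsu
      · exact h.srcOk w u (Or.inl ⟨b, hb⟩)
      · split_ifs at hsu with hwm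
        · rcases Finset.mem_union.1 hsu with h1 | h1
          · exact h.srcOk m u (Or.inr h1)
          · exact h.srcOk c.active u (Or.inr h1)
        · exact h.srcOk w u (Or.inr hsu)
    · -- labOk
      intro w hw hne
      by_cases hwm : w = m
      · exact ⟨s, hwm ▸ hkm⟩
      · apply h.labOk w hw
        simp only [jumpUpdate_Qup, jumpUpdate_Qright, jumpUpdate_SUup, jumpUpdate_SUright,
          if_neg hwm] at hne
        exact hne
    · -- inv1
      intro u hu L' hk'
      rcases h.inv1 u hu L' hk' with ⟨w, hw, hl, b, hb⟩ | ⟨w, hw, hsu⟩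
      · exact Or.inl ⟨w, hw, hl, b, by simpa only [jumpUpdate_Qup] using hb⟩
      · refine Or.inr ⟨w, hw, ?_⟩
        simp only [jumpUpdate_SUup]
        split_ifs with hwm
        · exact Finset.mem_union_left _ (hwm ▸ hsu)
        · exact hsu
    · -- inv2
      intro u hu L' hk'
      rcases h.inv2 u hu L' hk' with ⟨w, hw, hl, b, hb⟩ | ⟨w, hw, hsu⟩
      · exact Or.inl ⟨w, hw, hl, b, by simpa only [jumpUpdate_Qright] using hb⟩
      · refine Or.inr ⟨w, hw, ?_⟩
        simp only [jumpUpdate_SUright]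
        split_ifs with hwm
        · exact Finset.mem_union_left _ (hwm ▸ hsu)
        · exact hsu
    · -- inv3
      intro u hu L' hk'
      rcases h.inv3 u hu L' hk' with ⟨w, hw, hl, b, hb⟩ | ⟨w, hw, hl, b, hb⟩
      · exact Or.inl ⟨w, hw, hl, b, by simpa only [jumpUpdate_Qup] using hb⟩
      · exact Or.inr ⟨w, hw, hl, b, by simpa only [jumpUpdate_Qright] using hb⟩
  | union junk y rest m s s' hact hqd hQl hjunk hrep hne hmV hka hkm hedge =>
    have hma2 : c.active ≠ m := fun e => hne e.symm
    have kI : ∀ x L', (c.tree.contract c.active m).kind x = DNodeKind.par L' ↔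
        c.tree.kind x = DNodeKind.par L' := by
      intro x L'
      rw [contract_kind]
      split_ifs with hx
      · subst hx
        rw [hka, hkm]
        simp only [mergeKind]
        constructor
        · intro hc; exact DNodeKind.noConfusion hc
        · intro hc; exact DNodeKind.noConfusion hc
      · exact Iff.rfl
    have hVmem : ∀ w, w ∈ c.tree.V → w ≠ m → w ∈ (c.tree.contract c.active m).V :=
      fun w hw hwm => Finset.mem_erase.2 ⟨hwm, hw⟩
    have hactV' : c.active ∈ (c.tree.contract c.active m).V := hVmem _ hact hma2
    have hkact' : ∃ t, (c.tree.contract c.active m).kind c.active = DNodeKind.labeled t :=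
      ⟨s ∪ s', by rw [contract_kind, if_pos rfl, hka, hkm]; rfl⟩
    have hlab' : ∀ w, (∃ t, c.tree.kind w = DNodeKind.labeled t) →
        ∃ t, (c.tree.contract c.active m).kind w = DNodeKind.labeled t := by
      rintro w ⟨t, ht⟩
      by_cases hwa : w = c.active
      · subst hwa; exact hkact'
      · exact ⟨t, by rw [contract_kind, if_neg hwa]; exact ht⟩
    have transUp : ∀ u, WUp c u →
        ∃ w ∈ (c.tree.contract c.active m).V,
          (∃ t, (c.tree.contract c.active m).kind w = DNodeKind.labeled t) ∧
          ∃ b, (u, b) ∈ (unionUpdate c rest m w).Qup := by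
      rintro u ⟨w, hw, hl, b, hb⟩
      by_cases hwm : w = m
      · refine ⟨c.active, hactV', hkact', b, ?_⟩
        rw [unionUpdate_Qup c rest m c.active hne, if_pos rfl]
        exact List.mem_append.2 (Or.inr (hwm ▸ hb))
      · refine ⟨w, hVmem w hw hwm, hlab' w hl, b, ?_⟩
        rw [unionUpdate_Qup c rest m w hne]
        split_ifs with hwa
        · exact List.mem_append.2 (Or.inl (hwa ▸ hb))
        · exact hb
    have transRight : ∀ L', WRight c L' →
        ∃ w ∈ (c.tree.contract c.active m).V,
          (∃ t, (c.tree.contract c.active m).kind w = DNodeKind.labeled t) ∧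
          ∃ b, (L', b) ∈ (unionUpdate c rest m w).Qright := by
      rintro L' ⟨w, hw, hl, b, hb⟩
      by_cases hwm : w = m
      · refine ⟨c.active, hactV', hkact', b, ?_⟩
        rw [unionUpdate_Qright c rest m c.active hne, if_pos rfl]
        exact List.mem_append.2 (Or.inr (hwm ▸ hb))
      · refine ⟨w, hVmem w hw hwm, hlab' w hl, b, ?_⟩
        rw [unionUpdate_Qright c rest m w hne]
        split_ifs with hwa
        · exact List.mem_append.2 (Or.inl (hwa ▸ hb))
        · exact hb
    have transSUp : ∀ u, SUpW c u →
        ∃ w ∈ (c.tree.contract c.active m).V, u ∈ (unionUpdate c rest m w).SUup := by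
      rintro u ⟨w, hw, hb⟩
      by_cases hwm : w = m
      · refine ⟨c.active, hactV', ?_⟩
        rw [unionUpdate_SUup c rest m c.active hne, if_pos rfl]
        exact Finset.mem_union_right _ (hwm ▸ hb)
      · refine ⟨w, hVmem w hw hwm, ?_⟩
        rw [unionUpdate_SUup c rest m w hne]
        split_ifs with hwa
        · exact Finset.mem_union_left _ (hwa ▸ hb)
        · exact hb
    have transSRight : ∀ L', SRightW c L' →
        ∃ w ∈ (c.tree.contract c.active m).V, L' ∈ (unionUpdate c rest m w).SUright := by
      rintro L' ⟨w, hw, hb⟩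
      by_cases hwm : w = m
      · refine ⟨c.active, hactV', ?_⟩
        rw [unionUpdate_SUright c rest m c.active hne, if_pos rfl]
        exact Finset.mem_union_right _ (hwm ▸ hb)
      · refine ⟨w, hVmem w hw hwm, ?_⟩
        rw [unionUpdate_SUright c rest m w hne]
        split_ifs with hwa
        · exact Finset.mem_union_left _ (hwa ▸ hb)
        · exact hb
    refine ⟨fun x L' => (kI x L').trans (h.kindIff x L'),
      fun x hx => h.vsub x (Finset.mem_of_mem_erase hx), ?_, ?_, ?_, ?_, ?_⟩
    · -- srcOk
      intro w u hu
      simp only [unionUpdate_Qup c rest m w hne, unionUpdate_SUup c rest m w hne] at hu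
      rcases hu with ⟨b, hb⟩ | hsu
      · split_ifs at hb with h1 h2
        · rcases List.mem_append.1 hb with h3 | h3
          · exact h.srcOk c.active u (Or.inl ⟨b, h3⟩)
          · exact h.srcOk m u (Or.inl ⟨b, h3⟩)
        · simp at hb
        · exact h.srcOk w u (Or.inl ⟨b, hb⟩)
      · split_ifs at hsu with h1 h2
        · rcases Finset.mem_union.1 hsu with h3 | h3
          · exact h.srcOk c.active u (Or.inr h3)
          · exact h.srcOk m u (Or.inr h3)
        · simp at hsu
        · exact h.srcOk w u (Or.inr hsu)
    · -- labOk
      intro w hw hne'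
      by_cases hwa : w = c.active
      · subst hwa; exact hkact'
      · have hw' := Finset.mem_of_mem_erase hw
        have hwm : w ≠ m := (Finset.mem_erase.1 hw).1
        refine hlab' w (h.labOk w hw' ?_)
        simpa only [unionUpdate_Qup c rest m w hne, unionUpdate_Qright c rest m w hne,
          unionUpdate_SUup c rest m w hne, unionUpdate_SUright c rest m w hne,
          if_neg hwa, if_neg hwm] using hne'
    · -- inv1
      intro u hu L' hk'
      have hck : c.tree.kind u = DNodeKind.par L' := (kI u L').1 hk'
      rcases h.inv1 u (Finset.mem_of_mem_erase hu) L' hck with hW | hS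
      · obtain ⟨w, hw, hl, b, hb⟩ := transUp u hW
        exact Or.inl ⟨w, hw, hl, b, hb⟩
      · obtain ⟨w, hw, hb⟩ := transSUp u hS
        exact Or.inr ⟨w, hw, hb⟩
    · -- inv2
      intro u hu L' hk'
      have hck : c.tree.kind u = DNodeKind.par L' := (kI u L').1 hk'
      rcases h.inv2 u (Finset.mem_of_mem_erase hu) L' hck with hW | hS
      · obtain ⟨w, hw, hl, b, hb⟩ := transRight L' hW
        exact Or.inl ⟨w, hw, hl, b, hb⟩
      · obtain ⟨w, hw, hb⟩ := transSRight L' hS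
        exact Or.inr ⟨w, hw, hb⟩
    · -- inv3
      intro u hu L' hk'
      have hck : c.tree.kind u = DNodeKind.par L' := (kI u L').1 hk'
      rcases h.inv3 u (Finset.mem_of_mem_erase hu) L' hck with hW | hW
      · obtain ⟨w, hw, hl, b, hb⟩ := transUp u hW
        exact Or.inl ⟨w, hw, hl, b, hb⟩
      · obtain ⟨w, hw, hl, b, hb⟩ := transRight L' hW
        exact Or.inr ⟨w, hw, hl, b, hb⟩

  | elimRight1 L b rest v s hact hqd hql hQr hSup hvV hkv hupv hedge hka hls hrs hdeg =>
    have kI : ∀ x, (c.tree.elimAt v c.active).kind x = c.tree.kind x := fun _ => rfl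
    refine ⟨h.kindIff, fun x hx => h.vsub x (Finset.mem_of_mem_erase hx), ?_, ?_, ?_, ?_, ?_⟩
    · -- srcOk
      intro w u hu
      apply h.srcOk w u
      simpa only [elimRightUpdate1_Qup, elimRightUpdate1_SUup] using hu
    · -- labOk
      intro w hw hne'
      apply h.labOk w (Finset.mem_of_mem_erase hw)
      simp only [elimRightUpdate1_Qup, elimRightUpdate1_Qright, elimRightUpdate1_SUup, elimRightUpdate1_SUright] at hne'
      rcases hne' with h1 | h2 | h3 | h4
      · exact Or.inl h1
      · refine Or.inr (Or.inl ?_)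
        split_ifs at h2 with hwa
        · subst hwa; rw [hQr]; simp
        · exact h2
      · exact Or.inr (Or.inr (Or.inl h3))
      · exact Or.inr (Or.inr (Or.inr h4))
    · -- inv1
      intro u hu L' hk'
      have hune : u ≠ v := (Finset.mem_erase.1 hu).1
      have hu' := Finset.mem_of_mem_erase hu
      rcases h.inv1 u hu' L' hk' with ⟨w, hw, hl, b', hb⟩ | ⟨w, hw, hsu⟩
      · obtain ⟨t, ht⟩ := hl
        refine Or.inl ⟨w, Finset.mem_erase.2 ⟨lab_ne_par ht hkv, hw⟩, ⟨t, ht⟩, b', ?_⟩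
        simpa only [elimRightUpdate1_Qup] using hb
      · have hwlab := h.labOk w hw (Or.inr (Or.inr (Or.inl (Finset.ne_empty_of_mem hsu))))
        obtain ⟨t, ht⟩ := hwlab
        refine Or.inr ⟨w, Finset.mem_erase.2 ⟨lab_ne_par ht hkv, hw⟩, ?_⟩
        simpa only [elimRightUpdate1_SUup] using hsu
    · -- inv2
      intro u hu L' hk'
      have hune : u ≠ v := (Finset.mem_erase.1 hu).1
      have hu' := Finset.mem_of_mem_erase hu
      rcases h.inv2 u hu' L' hk' with ⟨w, hw, hl, b', hb⟩ | ⟨w, hw, hsu⟩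
      · obtain ⟨t, ht⟩ := hl
        refine Or.inl ⟨w, Finset.mem_erase.2 ⟨lab_ne_par ht hkv, hw⟩, ⟨t, ht⟩, b', ?_⟩
        simp only [elimRightUpdate1_Qright]
        split_ifs with hwa
        · subst hwa
          rw [hQr] at hb
          rcases List.mem_cons.1 hb with h1 | h1
          · exfalso
            have hLL : L' = L := (Prod.mk.injEq _ _ _ _ ▸ h1).1
            exact hune (liveInj u hu' v hvV L (hLL ▸ hk') hkv)
          · exact h1
        · exact hb
      · have hwlab := h.labOk w hw (Or.inr (Or.inr (Or.inr (Finset.ne_empty_of_mem hsu))))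
        obtain ⟨t, ht⟩ := hwlab
        refine Or.inr ⟨w, Finset.mem_erase.2 ⟨lab_ne_par ht hkv, hw⟩, ?_⟩
        simpa only [elimRightUpdate1_SUright] using hsu
    · -- inv3
      intro u hu L' hk'
      have hune : u ≠ v := (Finset.mem_erase.1 hu).1
      have hu' := Finset.mem_of_mem_erase hu
      rcases h.inv3 u hu' L' hk' with ⟨w, hw, hl, b', hb⟩ | ⟨w, hw, hl, b', hb⟩
      · obtain ⟨t, ht⟩ := hl
        refine Or.inl ⟨w, Finset.mem_erase.2 ⟨lab_ne_par ht hkv, hw⟩, ⟨t, ht⟩, b', ?_⟩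
        simpa only [elimRightUpdate1_Qup] using hb
      · obtain ⟨t, ht⟩ := hl
        refine Or.inr ⟨w, Finset.mem_erase.2 ⟨lab_ne_par ht hkv, hw⟩, ⟨t, ht⟩, b', ?_⟩
        simp only [elimRightUpdate1_Qright]
        split_ifs with hwa
        · subst hwa
          rw [hQr] at hb
          rcases List.mem_cons.1 hb with h1 | h1
          · exfalso
            have hLL : L' = L := (Prod.mk.injEq _ _ _ _ ▸ h1).1
            exact hune (liveInj u hu' v hvV L (hLL ▸ hk') hkv)
          · exact h1
        · exact hb

  | elimRight2 L b rest v w s hact hqd hql hQr hSup hvV hkv hupv hedge hka hls hrs hvw hwa hwv =>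
    have kI : ∀ x, (c.tree.elimAt v c.active).kind x = c.tree.kind x := fun _ => rfl
    refine ⟨h.kindIff, fun x hx => h.vsub x (Finset.mem_of_mem_erase hx), ?_, ?_, ?_, ?_, ?_⟩
    · -- srcOk
      intro w u hu
      apply h.srcOk w u
      simpa only [elimRightUpdate2_Qup, elimRightUpdate2_SUup] using hu
    · -- labOk
      intro w hw hne'
      apply h.labOk w (Finset.mem_of_mem_erase hw)
      simp only [elimRightUpdate2_Qup, elimRightUpdate2_Qright, elimRightUpdate2_SUup, elimRightUpdate2_SUright] at hne'
      rcases hne' with h1 | h2 | h3 | h4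
      · exact Or.inl h1
      · refine Or.inr (Or.inl ?_)
        split_ifs at h2 with hwa
        · subst hwa; rw [hQr]; simp
        · exact h2
      · exact Or.inr (Or.inr (Or.inl h3))
      · exact Or.inr (Or.inr (Or.inr h4))
    · -- inv1
      intro u hu L' hk'
      have hune : u ≠ v := (Finset.mem_erase.1 hu).1
      have hu' := Finset.mem_of_mem_erase hu
      rcases h.inv1 u hu' L' hk' with ⟨w, hw, hl, b', hb⟩ | ⟨w, hw, hsu⟩
      · obtain ⟨t, ht⟩ := hl
        refine Or.inl ⟨w, Finset.mem_erase.2 ⟨lab_ne_par ht hkv, hw⟩, ⟨t, ht⟩, b', ?_⟩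
        simpa only [elimRightUpdate2_Qup] using hb
      · have hwlab := h.labOk w hw (Or.inr (Or.inr (Or.inl (Finset.ne_empty_of_mem hsu))))
        obtain ⟨t, ht⟩ := hwlab
        refine Or.inr ⟨w, Finset.mem_erase.2 ⟨lab_ne_par ht hkv, hw⟩, ?_⟩
        simpa only [elimRightUpdate2_SUup] using hsu
    · -- inv2
      intro u hu L' hk'
      have hune : u ≠ v := (Finset.mem_erase.1 hu).1
      have hu' := Finset.mem_of_mem_erase hu
      rcases h.inv2 u hu' L' hk' with ⟨w, hw, hl, b', hb⟩ | ⟨w, hw, hsu⟩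
      · obtain ⟨t, ht⟩ := hl
        refine Or.inl ⟨w, Finset.mem_erase.2 ⟨lab_ne_par ht hkv, hw⟩, ⟨t, ht⟩, b', ?_⟩
        simp only [elimRightUpdate2_Qright]
        split_ifs with hwa
        · subst hwa
          rw [hQr] at hb
          rcases List.mem_cons.1 hb with h1 | h1
          · exfalso
            have hLL : L' = L := (Prod.mk.injEq _ _ _ _ ▸ h1).1
            exact hune (liveInj u hu' v hvV L (hLL ▸ hk') hkv)
          · exact h1
        · exact hb
      · have hwlab := h.labOk w hw (Or.inr (Or.inr (Or.inr (Finset.ne_empty_of_mem hsu))))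
        obtain ⟨t, ht⟩ := hwlab
        refine Or.inr ⟨w, Finset.mem_erase.2 ⟨lab_ne_par ht hkv, hw⟩, ?_⟩
        simpa only [elimRightUpdate2_SUright] using hsu
    · -- inv3
      intro u hu L' hk'
      have hune : u ≠ v := (Finset.mem_erase.1 hu).1
      have hu' := Finset.mem_of_mem_erase hu
      rcases h.inv3 u hu' L' hk' with ⟨w, hw, hl, b', hb⟩ | ⟨w, hw, hl, b', hb⟩
      · obtain ⟨t, ht⟩ := hl
        refine Or.inl ⟨w, Finset.mem_erase.2 ⟨lab_ne_par ht hkv, hw⟩, ⟨t, ht⟩, b', ?_⟩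
        simpa only [elimRightUpdate2_Qup] using hb
      · obtain ⟨t, ht⟩ := hl
        refine Or.inr ⟨w, Finset.mem_erase.2 ⟨lab_ne_par ht hkv, hw⟩, ⟨t, ht⟩, b', ?_⟩
        simp only [elimRightUpdate2_Qright]
        split_ifs with hwa
        · subst hwa
          rw [hQr] at hb
          rcases List.mem_cons.1 hb with h1 | h1
          · exfalso
            have hLL : L' = L := (Prod.mk.injEq _ _ _ _ ▸ h1).1
            exact hune (liveInj u hu' v hvV L (hLL ▸ hk') hkv)
          · exact h1
        · exact hb

  | reviveUp L b rest w v hact hqd hql hQr hSup hwV hSU hkv =>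
    have hvT : v ∈ T.V := h.srcOk w v (Or.inr hSU)
    have hwlab : ∃ t, c.tree.kind w = DNodeKind.labeled t :=
      h.labOk w hwV (Or.inr (Or.inr (Or.inl (Finset.ne_empty_of_mem hSU))))
    refine ⟨h.kindIff, h.vsub, ?_, ?_, ?_, ?_, ?_⟩
    · -- srcOk
      intro w' u hu
      simp only [reviveUpUpdate_Qup, reviveUpUpdate_SUup] at hu
      rcases hu with ⟨b', hb⟩ | hsu
      · split_ifs at hb with hww
        · rcases List.mem_append.1 hb with h1 | h1
          · exact h.srcOk w' u (Or.inl ⟨b', h1⟩)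
          · have huv : u = v := (Prod.mk.injEq _ _ _ _ ▸ List.mem_singleton.1 h1).1
            exact huv ▸ hvT
        · exact h.srcOk w' u (Or.inl ⟨b', hb⟩)
      · exact h.srcOk w' u (Or.inr hsu)
    · -- labOk
      intro w' hw' hne'
      apply h.labOk w' hw'
      simp only [reviveUpUpdate_Qup, reviveUpUpdate_Qright, reviveUpUpdate_SUup,
        reviveUpUpdate_SUright] at hne'
      rcases hne' with h1 | h2 | h3 | h4
      · split_ifs at h1 with hww
        · exact Or.inr (Or.inr (Or.inl (by rw [hww]; exact Finset.ne_empty_of_mem hSU)))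
        · exact Or.inl h1
      · split_ifs at h2 with hwa
        · exact Or.inr (Or.inl (by rw [hwa, hQr]; simp))
        · exact Or.inr (Or.inl h2)
      · exact Or.inr (Or.inr (Or.inl h3))
      · split_ifs at h4 with hwa
        · exact Or.inr (Or.inl (by rw [hwa, hQr]; simp))
        · exact Or.inr (Or.inr (Or.inr h4))
    · -- inv1
      intro u hu L' hk'
      rcases h.inv1 u hu L' hk' with ⟨w', hw', hl, b', hb⟩ | ⟨w2, hw2, hsu⟩
      · refine Or.inl ⟨w', hw', hl, b', ?_⟩
        simp only [reviveUpUpdate_Qup]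
        split_ifs with hww
        · exact List.mem_append.2 (Or.inl hb)
        · exact hb
      · exact Or.inr ⟨w2, hw2, by simpa only [reviveUpUpdate_SUup] using hsu⟩
    · -- inv2
      intro u hu L' hk'
      rcases h.inv2 u hu L' hk' with ⟨w', hw', hl, b', hb⟩ | ⟨w2, hw2, hsu⟩
      · by_cases hwa : w' = c.active
        · subst hwa
          rw [hQr] at hb
          rcases List.mem_cons.1 hb with h1 | h1
          · have hLL : L' = L := (Prod.mk.injEq _ _ _ _ ▸ h1).1
            refine Or.inr ⟨c.active, hact, ?_⟩
            simp only [reviveUpUpdate_SUright, if_pos rfl]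
            simp [hLL]
          · refine Or.inl ⟨c.active, hact, hl, b', ?_⟩
            simp only [reviveUpUpdate_Qright, if_pos rfl]
            exact h1
        · refine Or.inl ⟨w', hw', hl, b', ?_⟩
          simp only [reviveUpUpdate_Qright, if_neg hwa]
          exact hb
      · refine Or.inr ⟨w2, hw2, ?_⟩
        simp only [reviveUpUpdate_SUright]
        split_ifs with hwa
        · exact Finset.mem_insert_of_mem hsu
        · exact hsu
    · -- inv3
      intro u hu L' hk'
      rcases h.inv3 u hu L' hk' with ⟨w', hw', hl, b', hb⟩ | ⟨w', hw', hl, b', hb⟩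
      · refine Or.inl ⟨w', hw', hl, b', ?_⟩
        simp only [reviveUpUpdate_Qup]
        split_ifs with hww
        · exact List.mem_append.2 (Or.inl hb)
        · exact hb
      · by_cases hwa : w' = c.active
        · subst hwa
          rw [hQr] at hb
          rcases List.mem_cons.1 hb with h1 | h1
          · have hLL : L' = L := (Prod.mk.injEq _ _ _ _ ▸ h1).1
            have huv : u = v := hinj u (h.vsub u hu) v hvT L
              ((h.kindIff u L).1 (hLL ▸ hk')) ((h.kindIff v L).1 hkv)
            refine Or.inl ⟨w, hwV, hwlab, true, ?_⟩
            simp only [reviveUpUpdate_Qup, if_pos rfl]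
            rw [huv]
            simp
          · refine Or.inr ⟨c.active, hact, hl, b', ?_⟩
            simp only [reviveUpUpdate_Qright, if_pos rfl]
            exact h1
        · refine Or.inr ⟨w', hw', hl, b', ?_⟩
          simp only [reviveUpUpdate_Qright, if_neg hwa]
          exact hb
  | stashRight L b rest hact hqd hql hQr hSup hSU =>
    refine ⟨h.kindIff, h.vsub, ?_, ?_, ?_, ?_, ?_⟩
    · -- srcOk
      intro w' u hu
      apply h.srcOk w' u
      simpa only [stashRightUpdate_Qup, stashRightUpdate_SUup] using hu
    · -- labOk
      intro w' hw' hne'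
      apply h.labOk w' hw'
      simp only [stashRightUpdate_Qup, stashRightUpdate_Qright, stashRightUpdate_SUup,
        stashRightUpdate_SUright] at hne'
      rcases hne' with h1 | h2 | h3 | h4
      · exact Or.inl h1
      · split_ifs at h2 with hwa
        · exact Or.inr (Or.inl (by rw [hwa, hQr]; simp))
        · exact Or.inr (Or.inl h2)
      · exact Or.inr (Or.inr (Or.inl h3))
      · split_ifs at h4 with hwa
        · exact Or.inr (Or.inl (by rw [hwa, hQr]; simp))
        · exact Or.inr (Or.inr (Or.inr h4))
    · -- inv1
      intro u hu L' hk'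
      rcases h.inv1 u hu L' hk' with ⟨w', hw', hl, b', hb⟩ | ⟨w2, hw2, hsu⟩
      · exact Or.inl ⟨w', hw', hl, b', by simpa only [stashRightUpdate_Qup] using hb⟩
      · exact Or.inr ⟨w2, hw2, by simpa only [stashRightUpdate_SUup] using hsu⟩
    · -- inv2
      intro u hu L' hk'
      rcases h.inv2 u hu L' hk' with ⟨w', hw', hl, b', hb⟩ | ⟨w2, hw2, hsu⟩
      · by_cases hwa : w' = c.active
        · subst hwa
          rw [hQr] at hb
          rcases List.mem_cons.1 hb with h1 | h1
          · have hLL : L' = L := (Prod.mk.injEq _ _ _ _ ▸ h1).1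
            refine Or.inr ⟨c.active, hact, ?_⟩
            simp only [stashRightUpdate_SUright, if_pos rfl]
            simp [hLL]
          · refine Or.inl ⟨c.active, hact, hl, b', ?_⟩
            simp only [stashRightUpdate_Qright, if_pos rfl]
            exact h1
        · refine Or.inl ⟨w', hw', hl, b', ?_⟩
          simp only [stashRightUpdate_Qright, if_neg hwa]
          exact hb
      · refine Or.inr ⟨w2, hw2, ?_⟩
        simp only [stashRightUpdate_SUright]
        split_ifs with hwa
        · exact Finset.mem_insert_of_mem hsu
        · exact hsu
    · -- inv3
      intro u hu L' hk'
      rcases h.inv3 u hu L' hk' with ⟨w', hw', hl, b', hb⟩ | ⟨w', hw', hl, b', hb⟩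
      · exact Or.inl ⟨w', hw', hl, b', by simpa only [stashRightUpdate_Qup] using hb⟩
      · by_cases hwa : w' = c.active
        · subst hwa
          rw [hQr] at hb
          rcases List.mem_cons.1 hb with h1 | h1
          · have hLL : L' = L := (Prod.mk.injEq _ _ _ _ ▸ h1).1
            rcases h.inv1 u hu L' hk' with ⟨w2, hw2, hl2, b2, hb2⟩ | ⟨w2, hw2, hsu⟩
            · exact Or.inl ⟨w2, hw2, hl2, b2,
                by simpa only [stashRightUpdate_Qup] using hb2⟩
            · exact absurd (hLL ▸ hk') (hSU w2 hw2 u hsu)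
          · refine Or.inr ⟨c.active, hact, hl, b', ?_⟩
            simp only [stashRightUpdate_Qright, if_pos rfl]
            exact h1
        · refine Or.inr ⟨w', hw', hl, b', ?_⟩
          simp only [stashRightUpdate_Qright, if_neg hwa]
          exact hb
  | elimUp1 v b rest L s hact hqd hql hQr hQu hkv hSr hvV hupv hedge hka hls hrs hdeg =>
    refine ⟨h.kindIff, fun x hx => h.vsub x (Finset.mem_of_mem_erase hx), ?_, ?_, ?_, ?_, ?_⟩
    · -- srcOk
      intro w u hu
      apply h.srcOk w u
      simp only [elimUpUpdate1_Qup, elimUpUpdate1_SUup] at hu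
      rcases hu with ⟨b', hb⟩ | hsu
      · split_ifs at hb with hwa
        · exact Or.inl ⟨b', by rw [hwa, hQu]; exact List.mem_cons_of_mem _ hb⟩
        · exact Or.inl ⟨b', hb⟩
      · exact Or.inr hsu
    · -- labOk
      intro w hw hne'
      apply h.labOk w (Finset.mem_of_mem_erase hw)
      simp only [elimUpUpdate1_Qup, elimUpUpdate1_Qright, elimUpUpdate1_SUup, elimUpUpdate1_SUright] at hne'
      rcases hne' with h1 | h2 | h3 | h4
      · refine Or.inl ?_
        split_ifs at h1 with hwa
        · subst hwa; rw [hQu]; simp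
        · exact h1
      · exact Or.inr (Or.inl h2)
      · exact Or.inr (Or.inr (Or.inl h3))
      · exact Or.inr (Or.inr (Or.inr h4))
    · -- inv1
      intro u hu L' hk'
      have hune : u ≠ v := (Finset.mem_erase.1 hu).1
      have hu' := Finset.mem_of_mem_erase hu
      rcases h.inv1 u hu' L' hk' with ⟨w, hw, hl, b', hb⟩ | ⟨w, hw, hsu⟩
      · obtain ⟨t, ht⟩ := hl
        refine Or.inl ⟨w, Finset.mem_erase.2 ⟨lab_ne_par ht hkv, hw⟩, ⟨t, ht⟩, b', ?_⟩
        simp only [elimUpUpdate1_Qup]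
        split_ifs with hwa
        · subst hwa
          rw [hQu] at hb
          rcases List.mem_cons.1 hb with h1 | h1
          · exact absurd (Prod.mk.injEq _ _ _ _ ▸ h1).1 hune
          · exact h1
        · exact hb
      · have hwlab := h.labOk w hw (Or.inr (Or.inr (Or.inl (Finset.ne_empty_of_mem hsu))))
        obtain ⟨t, ht⟩ := hwlab
        refine Or.inr ⟨w, Finset.mem_erase.2 ⟨lab_ne_par ht hkv, hw⟩, ?_⟩
        simpa only [elimUpUpdate1_SUup] using hsu
    · -- inv2
      intro u hu L' hk'
      have hune : u ≠ v := (Finset.mem_erase.1 hu).1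
      have hu' := Finset.mem_of_mem_erase hu
      rcases h.inv2 u hu' L' hk' with ⟨w, hw, hl, b', hb⟩ | ⟨w, hw, hsu⟩
      · obtain ⟨t, ht⟩ := hl
        refine Or.inl ⟨w, Finset.mem_erase.2 ⟨lab_ne_par ht hkv, hw⟩, ⟨t, ht⟩, b', ?_⟩
        simpa only [elimUpUpdate1_Qright] using hb
      · have hwlab := h.labOk w hw (Or.inr (Or.inr (Or.inr (Finset.ne_empty_of_mem hsu))))
        obtain ⟨t, ht⟩ := hwlab
        refine Or.inr ⟨w, Finset.mem_erase.2 ⟨lab_ne_par ht hkv, hw⟩, ?_⟩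
        simpa only [elimUpUpdate1_SUright] using hsu
    · -- inv3
      intro u hu L' hk'
      have hune : u ≠ v := (Finset.mem_erase.1 hu).1
      have hu' := Finset.mem_of_mem_erase hu
      rcases h.inv3 u hu' L' hk' with ⟨w, hw, hl, b', hb⟩ | ⟨w, hw, hl, b', hb⟩
      · obtain ⟨t, ht⟩ := hl
        refine Or.inl ⟨w, Finset.mem_erase.2 ⟨lab_ne_par ht hkv, hw⟩, ⟨t, ht⟩, b', ?_⟩
        simp only [elimUpUpdate1_Qup]
        split_ifs with hwa
        · subst hwa
          rw [hQu] at hb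
          rcases List.mem_cons.1 hb with h1 | h1
          · exact absurd (Prod.mk.injEq _ _ _ _ ▸ h1).1 hune
          · exact h1
        · exact hb
      · obtain ⟨t, ht⟩ := hl
        refine Or.inr ⟨w, Finset.mem_erase.2 ⟨lab_ne_par ht hkv, hw⟩, ⟨t, ht⟩, b', ?_⟩
        simpa only [elimUpUpdate1_Qright] using hb

  | elimUp2 v b rest L w s hact hqd hql hQr hQu hkv hSr hvV hupv hedge hka hls hrs hvw hwa hwv =>
    refine ⟨h.kindIff, fun x hx => h.vsub x (Finset.mem_of_mem_erase hx), ?_, ?_, ?_, ?_, ?_⟩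
    · -- srcOk
      intro w u hu
      apply h.srcOk w u
      simp only [elimUpUpdate2_Qup, elimUpUpdate2_SUup] at hu
      rcases hu with ⟨b', hb⟩ | hsu
      · split_ifs at hb with hwa
        · exact Or.inl ⟨b', by rw [hwa, hQu]; exact List.mem_cons_of_mem _ hb⟩
        · exact Or.inl ⟨b', hb⟩
      · exact Or.inr hsu
    · -- labOk
      intro w hw hne'
      apply h.labOk w (Finset.mem_of_mem_erase hw)
      simp only [elimUpUpdate2_Qup, elimUpUpdate2_Qright, elimUpUpdate2_SUup, elimUpUpdate2_SUright] at hne'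
      rcases hne' with h1 | h2 | h3 | h4
      · refine Or.inl ?_
        split_ifs at h1 with hwa
        · subst hwa; rw [hQu]; simp
        · exact h1
      · exact Or.inr (Or.inl h2)
      · exact Or.inr (Or.inr (Or.inl h3))
      · exact Or.inr (Or.inr (Or.inr h4))
    · -- inv1
      intro u hu L' hk'
      have hune : u ≠ v := (Finset.mem_erase.1 hu).1
      have hu' := Finset.mem_of_mem_erase hu
      rcases h.inv1 u hu' L' hk' with ⟨w, hw, hl, b', hb⟩ | ⟨w, hw, hsu⟩
      · obtain ⟨t, ht⟩ := hl
        refine Or.inl ⟨w, Finset.mem_erase.2 ⟨lab_ne_par ht hkv, hw⟩, ⟨t, ht⟩, b', ?_⟩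
        simp only [elimUpUpdate2_Qup]
        split_ifs with hwa
        · subst hwa
          rw [hQu] at hb
          rcases List.mem_cons.1 hb with h1 | h1
          · exact absurd (Prod.mk.injEq _ _ _ _ ▸ h1).1 hune
          · exact h1
        · exact hb
      · have hwlab := h.labOk w hw (Or.inr (Or.inr (Or.inl (Finset.ne_empty_of_mem hsu))))
        obtain ⟨t, ht⟩ := hwlab
        refine Or.inr ⟨w, Finset.mem_erase.2 ⟨lab_ne_par ht hkv, hw⟩, ?_⟩
        simpa only [elimUpUpdate2_SUup] using hsu
    · -- inv2
      intro u hu L' hk'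
      have hune : u ≠ v := (Finset.mem_erase.1 hu).1
      have hu' := Finset.mem_of_mem_erase hu
      rcases h.inv2 u hu' L' hk' with ⟨w, hw, hl, b', hb⟩ | ⟨w, hw, hsu⟩
      · obtain ⟨t, ht⟩ := hl
        refine Or.inl ⟨w, Finset.mem_erase.2 ⟨lab_ne_par ht hkv, hw⟩, ⟨t, ht⟩, b', ?_⟩
        simpa only [elimUpUpdate2_Qright] using hb
      · have hwlab := h.labOk w hw (Or.inr (Or.inr (Or.inr (Finset.ne_empty_of_mem hsu))))
        obtain ⟨t, ht⟩ := hwlab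
        refine Or.inr ⟨w, Finset.mem_erase.2 ⟨lab_ne_par ht hkv, hw⟩, ?_⟩
        simpa only [elimUpUpdate2_SUright] using hsu
    · -- inv3
      intro u hu L' hk'
      have hune : u ≠ v := (Finset.mem_erase.1 hu).1
      have hu' := Finset.mem_of_mem_erase hu
      rcases h.inv3 u hu' L' hk' with ⟨w, hw, hl, b', hb⟩ | ⟨w, hw, hl, b', hb⟩
      · obtain ⟨t, ht⟩ := hl
        refine Or.inl ⟨w, Finset.mem_erase.2 ⟨lab_ne_par ht hkv, hw⟩, ⟨t, ht⟩, b', ?_⟩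
        simp only [elimUpUpdate2_Qup]
        split_ifs with hwa
        · subst hwa
          rw [hQu] at hb
          rcases List.mem_cons.1 hb with h1 | h1
          · exact absurd (Prod.mk.injEq _ _ _ _ ▸ h1).1 hune
          · exact h1
        · exact hb
      · obtain ⟨t, ht⟩ := hl
        refine Or.inr ⟨w, Finset.mem_erase.2 ⟨lab_ne_par ht hkv, hw⟩, ⟨t, ht⟩, b', ?_⟩
        simpa only [elimUpUpdate2_Qright] using hb

  | reviveRight v b rest L w hact hqd hql hQr hQu hkv hSr hwV hSU =>
    have hwlab : ∃ t, c.tree.kind w = DNodeKind.labeled t :=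
      h.labOk w hwV (Or.inr (Or.inr (Or.inr (Finset.ne_empty_of_mem hSU))))
    refine ⟨h.kindIff, h.vsub, ?_, ?_, ?_, ?_, ?_⟩
    · -- srcOk
      intro w' u hu
      simp only [reviveRightUpdate_Qup, reviveRightUpdate_SUup] at hu
      rcases hu with ⟨b', hb⟩ | hsu
      · split_ifs at hb with hwa
        · exact h.srcOk c.active u (Or.inl ⟨b', by rw [hQu]; exact List.mem_cons_of_mem _ hb⟩)
        · exact h.srcOk w' u (Or.inl ⟨b', hb⟩)
      · split_ifs at hsu with hwa
        · rcases Finset.mem_insert.1 hsu with h1 | h1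
          · exact h1 ▸ h.srcOk c.active v (Or.inl ⟨b, by rw [hQu]; exact List.mem_cons_self⟩)
          · exact h.srcOk w' u (Or.inr h1)
        · exact h.srcOk w' u (Or.inr hsu)
    · -- labOk
      intro w' hw' hne'
      apply h.labOk w' hw'
      simp only [reviveRightUpdate_Qup, reviveRightUpdate_Qright, reviveRightUpdate_SUup,
        reviveRightUpdate_SUright] at hne'
      rcases hne' with h1 | h2 | h3 | h4
      · split_ifs at h1 with hwa
        · exact Or.inl (by rw [hwa, hQu]; simp)
        · exact Or.inl h1
      · split_ifs at h2 with hww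
        · exact Or.inr (Or.inr (Or.inr (by rw [hww]; exact Finset.ne_empty_of_mem hSU)))
        · exact Or.inr (Or.inl h2)
      · split_ifs at h3 with hwa
        · exact Or.inl (by rw [hwa, hQu]; simp)
        · exact Or.inr (Or.inr (Or.inl h3))
      · exact Or.inr (Or.inr (Or.inr h4))
    · -- inv1
      intro u hu L' hk'
      rcases h.inv1 u hu L' hk' with ⟨w', hw', hl, b', hb⟩ | ⟨w2, hw2, hsu⟩
      · by_cases hwa : w' = c.active
        · subst hwa
          rw [hQu] at hb
          rcases List.mem_cons.1 hb with h1 | h1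
          · have huv : u = v := (Prod.mk.injEq _ _ _ _ ▸ h1).1
            refine Or.inr ⟨c.active, hact, ?_⟩
            simp only [reviveRightUpdate_SUup, if_pos rfl]
            simp [huv]
          · refine Or.inl ⟨c.active, hact, hl, b', ?_⟩
            simp only [reviveRightUpdate_Qup, if_pos rfl]
            exact h1
        · refine Or.inl ⟨w', hw', hl, b', ?_⟩
          simp only [reviveRightUpdate_Qup, if_neg hwa]
          exact hb
      · refine Or.inr ⟨w2, hw2, ?_⟩
        simp only [reviveRightUpdate_SUup]
        split_ifs with hwa
        · exact Finset.mem_insert_of_mem hsu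
        · exact hsu
    · -- inv2
      intro u hu L' hk'
      rcases h.inv2 u hu L' hk' with ⟨w', hw', hl, b', hb⟩ | ⟨w2, hw2, hsu⟩
      · refine Or.inl ⟨w', hw', hl, b', ?_⟩
        simp only [reviveRightUpdate_Qright]
        split_ifs with hww
        · exact List.mem_append.2 (Or.inl hb)
        · exact hb
      · exact Or.inr ⟨w2, hw2, by simpa only [reviveRightUpdate_SUright] using hsu⟩
    · -- inv3
      intro u hu L' hk'
      rcases h.inv3 u hu L' hk' with ⟨w', hw', hl, b', hb⟩ | ⟨w', hw', hl, b', hb⟩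
      · by_cases hwa : w' = c.active
        · subst hwa
          rw [hQu] at hb
          rcases List.mem_cons.1 hb with h1 | h1
          · have huv : u = v := (Prod.mk.injEq _ _ _ _ ▸ h1).1
            have hLL : L' = L := by
              have h2 : DNodeKind.par L' = DNodeKind.par L := (huv ▸ hk').symm.trans hkv
              injection h2
            refine Or.inr ⟨w, hwV, hwlab, true, ?_⟩
            simp only [reviveRightUpdate_Qright, if_pos rfl]
            rw [hLL]
            simp
          · refine Or.inl ⟨c.active, hact, hl, b', ?_⟩
            simp only [reviveRightUpdate_Qup, if_pos rfl]
            exact h1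
        · refine Or.inl ⟨w', hw', hl, b', ?_⟩
          simp only [reviveRightUpdate_Qup, if_neg hwa]
          exact hb
      · refine Or.inr ⟨w', hw', hl, b', ?_⟩
        simp only [reviveRightUpdate_Qright]
        split_ifs with hww
        · exact List.mem_append.2 (Or.inl hb)
        · exact hb
  | stashUp v b rest L hact hqd hql hQr hQu hkv hSr hSU =>
    refine ⟨h.kindIff, h.vsub, ?_, ?_, ?_, ?_, ?_⟩
    · -- srcOk
      intro w' u hu
      simp only [stashUpUpdate_Qup, stashUpUpdate_SUup] at hu
      rcases hu with ⟨b', hb⟩ | hsu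
      · split_ifs at hb with hwa
        · exact h.srcOk c.active u (Or.inl ⟨b', by rw [hQu]; exact List.mem_cons_of_mem _ hb⟩)
        · exact h.srcOk w' u (Or.inl ⟨b', hb⟩)
      · split_ifs at hsu with hwa
        · rcases Finset.mem_insert.1 hsu with h1 | h1
          · exact h1 ▸ h.srcOk c.active v (Or.inl ⟨b, by rw [hQu]; exact List.mem_cons_self⟩)
          · exact h.srcOk w' u (Or.inr h1)
        · exact h.srcOk w' u (Or.inr hsu)
    · -- labOk
      intro w' hw' hne'
      apply h.labOk w' hw'
      simp only [stashUpUpdate_Qup, stashUpUpdate_Qright, stashUpUpdate_SUup,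
        stashUpUpdate_SUright] at hne'
      rcases hne' with h1 | h2 | h3 | h4
      · split_ifs at h1 with hwa
        · exact Or.inl (by rw [hwa, hQu]; simp)
        · exact Or.inl h1
      · exact Or.inr (Or.inl h2)
      · split_ifs at h3 with hwa
        · exact Or.inl (by rw [hwa, hQu]; simp)
        · exact Or.inr (Or.inr (Or.inl h3))
      · exact Or.inr (Or.inr (Or.inr h4))
    · -- inv1
      intro u hu L' hk'
      rcases h.inv1 u hu L' hk' with ⟨w', hw', hl, b', hb⟩ | ⟨w2, hw2, hsu⟩
      · by_cases hwa : w' = c.active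
        · subst hwa
          rw [hQu] at hb
          rcases List.mem_cons.1 hb with h1 | h1
          · have huv : u = v := (Prod.mk.injEq _ _ _ _ ▸ h1).1
            refine Or.inr ⟨c.active, hact, ?_⟩
            simp only [stashUpUpdate_SUup, if_pos rfl]
            simp [huv]
          · refine Or.inl ⟨c.active, hact, hl, b', ?_⟩
            simp only [stashUpUpdate_Qup, if_pos rfl]
            exact h1
        · refine Or.inl ⟨w', hw', hl, b', ?_⟩
          simp only [stashUpUpdate_Qup, if_neg hwa]
          exact hb
      · refine Or.inr ⟨w2, hw2, ?_⟩
        simp only [stashUpUpdate_SUup]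
        split_ifs with hwa
        · exact Finset.mem_insert_of_mem hsu
        · exact hsu
    · -- inv2
      intro u hu L' hk'
      rcases h.inv2 u hu L' hk' with ⟨w', hw', hl, b', hb⟩ | ⟨w2, hw2, hsu⟩
      · exact Or.inl ⟨w', hw', hl, b', by simpa only [stashUpUpdate_Qright] using hb⟩
      · exact Or.inr ⟨w2, hw2, by simpa only [stashUpUpdate_SUright] using hsu⟩
    · -- inv3
      intro u hu L' hk'
      rcases h.inv3 u hu L' hk' with ⟨w', hw', hl, b', hb⟩ | ⟨w', hw', hl, b', hb⟩
      · by_cases hwa : w' = c.active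
        · subst hwa
          rw [hQu] at hb
          rcases List.mem_cons.1 hb with h1 | h1
          · have huv : u = v := (Prod.mk.injEq _ _ _ _ ▸ h1).1
            have hLL : L' = L := by
              have h2 : DNodeKind.par L' = DNodeKind.par L := (huv ▸ hk').symm.trans hkv
              injection h2
            rcases h.inv2 u hu L' hk' with ⟨w2, hw2, hl2, b2, hb2⟩ | ⟨w2, hw2, hsu⟩
            · exact Or.inr ⟨w2, hw2, hl2, b2,
                by simpa only [stashUpUpdate_Qright] using hb2⟩
            · exact absurd (hLL ▸ hsu) (hSU w2 hw2)
          · refine Or.inl ⟨c.active, hact, hl, b', ?_⟩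
            simp only [stashUpUpdate_Qup, if_pos rfl]
            exact h1
        · refine Or.inl ⟨w', hw', hl, b', ?_⟩
          simp only [stashUpUpdate_Qup, if_neg hwa]
          exact hb
      · exact Or.inr ⟨w', hw', hl, b', by simpa only [stashUpUpdate_Qright] using hb⟩
/-- Throughout the execution of Algorithm B, for each ⅋-node L present in
the current deNM-tree, either L is in the queue Q_up of some labeled node, or the right
premise label r_L is in the queue Q_right of some labeled node. -/
theorem algorithm_B_invariant (Θ : ProofStructure)
    (T : PreTree) (hT : IsTranslation Θ T) (n : ℕ) (hn : T.IsLabeledVertex n)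
    (data0 : ℕ → NodeData) (hd : InitData T data0)
    (c : ConfigB)
    (hrun : Relation.ReflTransGen StepB
      { tree := T, active := n, data := data0, rep := initRep, visited := ∅ } c)
    (v : ℕ) (hv : v ∈ c.tree.V) (L : MLLLink) (hL : c.tree.kind v = DNodeKind.par L) :
    (∃ w ∈ c.tree.V, c.tree.IsLabeledVertex w ∧ ∃ b, (v, b) ∈ (c.data w).Qup) ∨
    (∃ w ∈ c.tree.V, c.tree.IsLabeledVertex w ∧ ∃ b, (L, b) ∈ (c.data w).Qright) := by
  have hinj := tinj_of_translation hT
  have hinv : InvB T c := by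
    clear hv hL v L
    induction hrun with
    | refl => exact inv_init hT hd n
    | tail hab hbc ih => exact inv_step hinj ih hbc
  rcases hinv.inv3 v hv L hL with ⟨w, hw, hl, b, hb⟩ | ⟨w, hw, hl, b, hb⟩
  · exact Or.inl ⟨w, hw, ⟨⟨hw, hl⟩, b, hb⟩⟩
  · exact Or.inr ⟨w, hw, ⟨⟨hw, hl⟩, b, hb⟩⟩
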